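/- Let X, Y be disjoint node sets in a maximal PDAG G that is b-amenable relative to (X, Y), and let Z be a node set disjoint from X ∪ Y with Z ∩ b-Forb(X,Y,G) = ∅. Then: if every proper b-non-causal definite status path from X to Y in G is blocked by Z, then for every DAG D represented by G, every proper non-causal path from X to Y in D is blocked by Z. -/

import Mathlib

/-- A partially directed graph with at most one edge between any two nodes
and no directed cycles (a PDAG). -/
structure PDAG (V : Type) where
  dir : V → V → Prop
  undir : V → V → Prop
  undir_symm : ∀ {x y}, undir x y → undir y x
  undir_irrefl : ∀ x, ¬ undir x x
  dir_not_undir : ∀ x y, dir x y → ¬ undir x y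
  acyclic : ∀ x, ¬ Relation.TransGen dir x x

namespace PDAG

variable {V : Type}

/-- There is an undirected edge between `x` and `y`. -/
def undirE (G : PDAG V) (x y : V) : Prop := G.undir x y ∨ G.undir y x

/-- `x` and `y` are adjacent. -/
def adj (G : PDAG V) (x y : V) : Prop := G.dir x y ∨ G.dir y x ∨ G.undirE x y

/-- The list of consecutive pairs of a list. -/
def consPairs (p : List V) : List (V × V) := p.zip p.tail

/-- The list of consecutive triples of a list. -/
def triples : List V → List (V × V × V)
  | a :: b :: c :: rest => (a, b, c) :: triples (b :: c :: rest)
  | _ => []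

/-- `p` is a path in `G`: at least two distinct nodes, pairwise successive adjacency. -/
def IsPath (G : PDAG V) (p : List V) : Prop :=
  2 ≤ p.length ∧ p.Nodup ∧ ∀ e ∈ consPairs p, G.adj e.1 e.2

/-- `p` is a path in `G` from `x` to `y`. -/
def PathFromTo (G : PDAG V) (p : List V) (x y : V) : Prop :=
  G.IsPath p ∧ p.head? = some x ∧ p.getLast? = some y

/-- `p` is a causal (fully directed) path in `G`. -/
def IsCausal (G : PDAG V) (p : List V) : Prop :=
  2 ≤ p.length ∧ p.Nodup ∧ ∀ e ∈ consPairs p, G.dir e.1 e.2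

/-- `p` is a non-causal path: it contains at least one edge directed backwards. -/
def NonCausal (G : PDAG V) (p : List V) : Prop :=
  G.IsPath p ∧ ∃ e ∈ consPairs p, G.dir e.2 e.1

/-- `p` is b-possibly causal in `G`: there is no edge `V_i ← V_j` for `i < j`. -/
def BPossCausal (G : PDAG V) (p : List V) : Prop :=
  G.IsPath p ∧ ∀ i j : Fin p.length, (i : ℕ) < (j : ℕ) → ¬ G.dir (p.get j) (p.get i)

/-- `p` is b-non-causal in `G`: some edge `V_i ← V_j` with `i < j` exists in `G`. -/
def BNonCausal (G : PDAG V) (p : List V) : Prop :=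
  G.IsPath p ∧ ∃ i j : Fin p.length, (i : ℕ) < (j : ℕ) ∧ G.dir (p.get j) (p.get i)

/-- A path with no edge on it pointing backwards (possibly causal in the local sense). -/
def LocalPossCausal (G : PDAG V) (p : List V) : Prop :=
  G.IsPath p ∧ ∀ e ∈ consPairs p, ¬ G.dir e.2 e.1

/-- `p` is unshielded: the outer nodes of every consecutive triple are non-adjacent. -/
def Unshielded (G : PDAG V) (p : List V) : Prop :=
  ∀ t ∈ triples p, ¬ G.adj t.1 t.2.2

/-- The middle node of a triple is a collider. -/
def ColliderAt (G : PDAG V) (t : V × V × V) : Prop :=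
  G.dir t.1 t.2.1 ∧ G.dir t.2.2 t.2.1

/-- The middle node of a triple is a definite non-collider. -/
def DefNonColliderAt (G : PDAG V) (t : V × V × V) : Prop :=
  G.dir t.2.1 t.1 ∨ G.dir t.2.1 t.2.2 ∨
    (G.undirE t.1 t.2.1 ∧ G.undirE t.2.1 t.2.2 ∧ ¬ G.adj t.1 t.2.2)

/-- `p` is a definite status path. -/
def DefiniteStatus (G : PDAG V) (p : List V) : Prop :=
  ∀ t ∈ triples p, G.ColliderAt t ∨ G.DefNonColliderAt t

/-- `y` is a descendant of `x` in `G` (via directed paths; every node descends from itself). -/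
def Desc (G : PDAG V) (x y : V) : Prop := x = y ∨ Relation.TransGen G.dir x y

/-- `p` is d-connecting given `Z`: every collider on `p` has a descendant in `Z`,
and every (definite) non-collider on `p` is not in `Z`. -/
def DConn (G : PDAG V) (p : List V) (Z : Set V) : Prop :=
  ∀ t ∈ triples p,
    (G.ColliderAt t → ∃ z ∈ Z, G.Desc t.2.1 z) ∧ (¬ G.ColliderAt t → t.2.1 ∉ Z)

/-- `Z` blocks the path `p`. -/
def Blocked (G : PDAG V) (p : List V) (Z : Set V) : Prop := ¬ G.DConn p Z

/-- `G` is closed under Meek's orientation rules R1–R4 (a maximal PDAG). -/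
def ClosedMeek (G : PDAG V) : Prop :=
  (∀ a b c, G.dir a b → G.undirE b c → ¬ G.adj a c → G.dir b c) ∧
  (∀ a b c, G.dir a b → G.dir b c → G.undirE a c → G.dir a c) ∧
  (∀ a b c d, G.undirE a b → G.undirE a c → G.undirE a d →
     G.dir c b → G.dir d b → ¬ G.adj c d → G.dir a b) ∧
  (∀ a b c d, G.undirE a b → G.undirE a c → G.undirE a d →
     G.dir d c → G.dir b d → ¬ G.adj b c → G.dir a c)

/-- `G` is a DAG: it has no undirected edges. -/
def IsDAG (G : PDAG V) : Prop := ∀ x y, ¬ G.undir x y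

/-- `G` and `H` have the same unshielded colliders. -/
def SameUC (G H : PDAG V) : Prop :=
  ∀ a b c, (G.dir a b ∧ G.dir c b ∧ ¬ G.adj a c) ↔ (H.dir a b ∧ H.dir c b ∧ ¬ H.adj a c)

/-- `H` is represented by `G`: same adjacencies, same unshielded colliders,
and every directed edge of `G` is in `H`. -/
def RepresentedBy (H G : PDAG V) : Prop :=
  (∀ x y, H.adj x y ↔ G.adj x y) ∧ SameUC H G ∧ ∀ x y, G.dir x y → H.dir x y

/-- `p` is a proper path from (a member of) `X` to (a member of) `Y`:
only its first node lies in `X`. -/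
def ProperPathFromTo (G : PDAG V) (X Y : Set V) (p : List V) : Prop :=
  G.IsPath p ∧ (∃ x ∈ X, p.head? = some x) ∧ (∃ y ∈ Y, p.getLast? = some y) ∧
    ∀ v ∈ p.tail, v ∉ X

/-- `w'` is a b-possible descendant of the node `w`. -/
def BPossDescNode (G : PDAG V) (w w' : V) : Prop :=
  w' = w ∨ ∃ p, G.BPossCausal p ∧ p.head? = some w ∧ p.getLast? = some w'

/-- The b-possible descendants of the node set `X` in `G`. -/
def BPossDe (G : PDAG V) (X : Set V) : Set V :=
  {w | w ∈ X ∨ ∃ x ∈ X, ∃ p, G.BPossCausal p ∧ p.head? = some x ∧ p.getLast? = some w}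

/-- The b-possible ancestors of the node set `X` in `G`. -/
def BPossAn (G : PDAG V) (X : Set V) : Set V :=
  {w | w ∈ X ∨ ∃ x ∈ X, ∃ p, G.BPossCausal p ∧ p.head? = some w ∧ p.getLast? = some x}

/-- The b-forbidden set relative to `(X, Y)` in `G`. -/
def BForb (G : PDAG V) (X Y : Set V) : Set V :=
  {w' | ∃ w p, w ∉ X ∧ G.ProperPathFromTo X Y p ∧ G.BPossCausal p ∧ w ∈ p ∧
    G.BPossDescNode w w'}

/-- `G` is b-amenable relative to `(X, Y)`: every proper b-possibly causal path
from `X` to `Y` starts with a directed edge out of `X`. -/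
def BAmenable (G : PDAG V) (X Y : Set V) : Prop :=
  ∀ p, G.ProperPathFromTo X Y p → G.BPossCausal p →
    ∀ a b, p.head? = some a → p.tail.head? = some b → G.dir a b

/-- The b-blocking condition: `Z` blocks every proper b-non-causal definite status
path from `X` to `Y` in `G`. -/
def BBlocking (G : PDAG V) (X Y Z : Set V) : Prop :=
  ∀ p, G.ProperPathFromTo X Y p → G.BNonCausal p → G.DefiniteStatus p → G.Blocked p Z

/-- The b-adjustment criterion for `Z` relative to `(X, Y)` in `G`. -/
def BAdjCrit (G : PDAG V) (X Y Z : Set V) : Prop :=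
  G.BAmenable X Y ∧ Z ∩ G.BForb X Y = ∅ ∧ G.BBlocking X Y Z

/-- In a DAG: `Z` blocks every proper non-causal path from `X` to `Y`. -/
def DagBlocking (D : PDAG V) (X Y Z : Set V) : Prop :=
  ∀ p, D.ProperPathFromTo X Y p → D.NonCausal p → D.Blocked p Z

/-- The canonical adjustment set `b-Adjust(X, Y, G)`. -/
def BAdjust (G : PDAG V) (X Y : Set V) : Set V :=
  G.BPossAn (X ∪ Y) \ (X ∪ Y ∪ G.BForb X Y)

/-- `C` is a CPDAG: a maximal PDAG representing a Markov equivalence class of DAGs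
in which every undirected edge is realized in both orientations by represented DAGs. -/
def IsCPDAG (C : PDAG V) : Prop :=
  C.ClosedMeek ∧ (∃ D : PDAG V, D.IsDAG ∧ RepresentedBy D C) ∧
  ∀ x y, C.undirE x y →
    (∃ D : PDAG V, D.IsDAG ∧ RepresentedBy D C ∧ D.dir x y) ∧
    (∃ D : PDAG V, D.IsDAG ∧ RepresentedBy D C ∧ D.dir y x)

end PDAG

namespace PDAG
variable {V : Type}

/- ### index lemmas -/

lemma getElem_idx_congr {l : List V} {i j : ℕ} (h : i = j) (hj : j < l.length) :
    l[i]'(h ▸ hj) = l[j] := by subst h; rfl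

lemma length_consPairs (p : List V) : (consPairs p).length = p.length - 1 := by
  simp [consPairs, List.length_zip, List.length_tail]

lemma getElem_consPairs (p : List V) (i : ℕ) (h : i + 1 < p.length) :
    (consPairs p)[i]'(by rw [length_consPairs]; omega) = (p[i], p[i+1]) := by
  simp [consPairs, List.getElem_zip, List.getElem_tail]

lemma mem_consPairs_iff {p : List V} {e : V × V} :
    e ∈ consPairs p ↔ ∃ i : ℕ, ∃ h : i + 1 < p.length, e = ((p[i]'(by omega)), p[i+1]) := by
  rw [List.mem_iff_getElem]
  constructor
  · rintro ⟨i, hi, rfl⟩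
    have h' : i + 1 < p.length := by rw [length_consPairs] at hi; omega
    exact ⟨i, h', (getElem_consPairs p i h').symm ▸ rfl⟩
  · rintro ⟨i, h, rfl⟩
    exact ⟨i, by rw [length_consPairs]; omega, getElem_consPairs p i h⟩

lemma mem_triples_iff : ∀ {p : List V} {t : V × V × V},
    t ∈ triples p ↔ ∃ j : ℕ, ∃ h : j + 2 < p.length,
      t = ((p[j]'(by omega)), (p[j+1]'(by omega)), p[j+2])
  | [], t => by simp [triples]
  | [a], t => by simp [triples]
  | [a, b], t => by simp [triples]
  | a :: b :: c :: r, t => by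
    simp only [triples, List.mem_cons]
    constructor
    · rintro (rfl | h)
      · exact ⟨0, by simp only [List.length_cons]; omega, by simp⟩
      · obtain ⟨j, hj, rfl⟩ := mem_triples_iff.mp h
        refine ⟨j + 1, by simp only [List.length_cons] at hj ⊢; omega, by simp⟩
    · rintro ⟨j, hj, rfl⟩
      match j with
      | 0 => left; simp
      | (j+1) =>
        right
        refine mem_triples_iff.mpr ⟨j, by simp at hj ⊢; omega, by simp⟩

lemma head?_eq_getElem0 {p : List V} (h : 0 < p.length) : p.head? = some (p[0]'h) := by
  cases p with
  | nil => simp at h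
  | cons a t => simp

lemma getLast?_eq_getElem {p : List V} (h : 0 < p.length) :
    p.getLast? = some (p[p.length - 1]'(by omega)) := by
  have hne : p ≠ [] := List.length_pos_iff.mp h
  rw [List.getLast?_eq_getLast hne, List.getLast_eq_getElem]

lemma getElem_mem_tail {p : List V} {i : ℕ} (hi : 1 ≤ i) (h : i < p.length) :
    p[i] ∈ p.tail := by
  have ht : p.tail = p.drop 1 := by simp [List.drop_one]
  rw [ht]
  have : p[i] = (p.drop 1)[i-1]'(by simp; omega) := by
    rw [List.getElem_drop]; congr 1; omega
  rw [this]; exact List.getElem_mem _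

lemma not_nodup_exists {l : List V} (h : ¬ l.Nodup) :
    ∃ i, ∃ j, ∃ _ : i < l.length, ∃ hj : j < l.length, i < j ∧ l[i] = l[j]'hj := by
  rw [List.nodup_iff_getElem?_ne_getElem?] at h
  push_neg at h
  obtain ⟨i, j, hij, hj, he⟩ := h
  refine ⟨i, j, by omega, hj, hij, ?_⟩
  have h1 : l[i]? = some (l[i]'(by omega)) := List.getElem?_eq_getElem (by omega)
  have h2 : l[j]? = some (l[j]'hj) := List.getElem?_eq_getElem hj
  rw [h1, h2] at he; exact Option.some_injective _ he

/- ### the splice operation -/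

def spl (p : List V) (a b : ℕ) : List V := p.take a ++ p.drop b

lemma length_spl {p : List V} {a b : ℕ} (ha : a ≤ p.length) (_ : b ≤ p.length) :
    (spl p a b).length = a + (p.length - b) := by
  simp [spl, List.length_take, List.length_drop]; omega

lemma sublist_spl {p : List V} {a b : ℕ} (hab : a ≤ b) : (spl p a b).Sublist p := by
  have h1 : p.take a = (p.take b).take a := by rw [List.take_take, min_eq_left hab]
  have h2 : List.Sublist ((p.take b).take a ++ p.drop b) (p.take b ++ p.drop b) :=
    (List.take_sublist _ _).append (List.Sublist.refl _)
  rw [List.take_append_drop] at h2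
  simpa [spl, h1] using h2

lemma nodup_spl {p : List V} {a b : ℕ} (hab : a ≤ b) (h : p.Nodup) : (spl p a b).Nodup :=
  h.sublist (sublist_spl hab)

lemma mem_spl {p : List V} {a b : ℕ} (hab : a ≤ b) {x : V} (h : x ∈ spl p a b) : x ∈ p :=
  (sublist_spl hab).mem h

lemma getElem_spl_left {p : List V} {a b m : ℕ} (hm : m < a) (ha : a ≤ p.length) :
    (spl p a b)[m]'(by simp [spl, List.length_take, List.length_drop]; omega) = p[m]'(by omega) := by
  simp only [spl]
  rw [List.getElem_append_left (by simp [List.length_take]; omega), List.getElem_take]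

lemma getElem_spl_right {p : List V} {a b m : ℕ} (hm : a ≤ m) (ha : a ≤ p.length)
    (hb : b ≤ p.length) (h2 : m - a + b < p.length) :
    (spl p a b)[m]'(by simp [spl, List.length_take, List.length_drop]; omega) = p[m - a + b]'h2 := by
  simp only [spl]
  rw [List.getElem_append_right (by simp [List.length_take]; omega)]
  have hl : (p.take a).length = a := by simp [List.length_take]; omega
  simp only [hl, List.getElem_drop]
  exact getElem_idx_congr (by omega) h2

end PDAG
namespace PDAG
variable {V : Type}

section Basic
variable {G D : PDAG V} {x y z a b c u : V}

lemma dir_ne (h : G.dir x y) : x ≠ y := by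
  rintro rfl; exact G.acyclic x (Relation.TransGen.single h)

lemma dir_asymm (h : G.dir x y) : ¬ G.dir y x := fun h' =>
  G.acyclic x ((Relation.TransGen.single h).tail h')

lemma dir3_acyc (h1 : G.dir x y) (h2 : G.dir y z) (h3 : G.dir z x) : False :=
  G.acyclic x (((Relation.TransGen.single h1).tail h2).tail h3)

lemma undirE_symm (h : G.undirE x y) : G.undirE y x := h.symm

lemma dir_not_undirE (h : G.dir x y) : ¬ G.undirE x y := by
  rintro (h' | h')
  · exact G.dir_not_undir x y h h'
  · exact G.dir_not_undir x y h (G.undir_symm h')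

lemma dir_adj (h : G.dir x y) : G.adj x y := Or.inl h

lemma dir_adj' (h : G.dir x y) : G.adj y x := Or.inr (Or.inl h)

lemma adj_symm (h : G.adj x y) : G.adj y x := by
  rcases h with h | h | h
  · exact Or.inr (Or.inl h)
  · exact Or.inl h
  · exact Or.inr (Or.inr (undirE_symm h))

lemma adj_ne (h : G.adj x y) : x ≠ y := by
  rintro rfl
  rcases h with h | h | h | h
  · exact dir_ne h rfl
  · exact dir_ne h rfl
  · exact G.undir_irrefl x h
  · exact G.undir_irrefl x h

lemma dag_dichotomy (hD : D.IsDAG) (h : D.adj x y) : D.dir x y ∨ D.dir y x := by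
  rcases h with h | h | h | h
  · exact Or.inl h
  · exact Or.inr h
  · exact absurd h (hD x y)
  · exact absurd h (hD y x)

lemma desc_head (h : G.dir a b) (h' : G.Desc b z) : G.Desc a z := by
  rcases h' with rfl | h'
  · exact Or.inr (Relation.TransGen.single h)
  · exact Or.inr (Relation.TransGen.head h h')

lemma descD_head (h : D.dir a b) (h' : D.Desc b z) : D.Desc a z := desc_head h h'

end Basic

section Rep
variable {G D : PDAG V} {x y a u : V}

lemma rep_dir (hrep : RepresentedBy D G) (h : G.dir x y) : D.dir x y := hrep.2.2 x y h

lemma rep_adj (hrep : RepresentedBy D G) : D.adj x y ↔ G.adj x y := hrep.1 x y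

lemma rep_edge (hD : D.IsDAG) (hrep : RepresentedBy D G) (h : D.dir x y) :
    G.dir x y ∨ G.undirE x y := by
  have hadj : G.adj x y := (rep_adj hrep).mp (dir_adj h)
  rcases hadj with h' | h' | h'
  · exact Or.inl h'
  · exact absurd (rep_dir hrep h') (dir_asymm h)
  · exact Or.inr h'

/-- R1-based adjacency propagation: a → b and b — u in G forces a ~ u. -/
lemma meek_adj (hG : G.ClosedMeek) (h1 : G.dir a y) (h2 : G.undirE y u) : G.adj a u := by
  by_contra hna
  exact dir_not_undirE (hG.1 a y u h1 h2 hna) h2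

/-- unshielded non-collider triples in a Meek-closed graph are of definite status -/
lemma meek_unshielded (hG : G.ClosedMeek) {a b c : V}
    (hab : G.adj a b) (hbc : G.adj b c) (hac : ¬ G.adj a c)
    (hnc : ¬ (G.dir a b ∧ G.dir c b)) : G.DefNonColliderAt (a, b, c) := by
  rcases hab with h1 | h1 | h1
  · rcases hbc with h2 | h2 | h2
    · exact Or.inr (Or.inl h2)
    · exact absurd ⟨h1, h2⟩ hnc
    · exact absurd (hG.1 a b c h1 h2 hac) (fun h => dir_not_undirE h h2)
  · exact Or.inl h1
  · rcases hbc with h2 | h2 | h2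
    · exact Or.inr (Or.inl h2)
    · have := hG.1 c b a h2 (undirE_symm h1) (fun h => hac (adj_symm h))
      exact absurd this (fun h => dir_not_undirE h (undirE_symm h1))
    · exact Or.inr (Or.inr ⟨h1, h2, hac⟩)

end Rep

/- ### reachability into Z along directed D-edges -/

def ReachN (D : PDAG V) (Z : Set V) : ℕ → V → Prop
  | 0, c => c ∈ Z
  | n+1, c => ∃ u, D.dir c u ∧ ReachN D Z n u

lemma reachN_desc {D : PDAG V} {Z : Set V} :
    ∀ {n : ℕ} {c : V}, ReachN D Z n c → ∃ z ∈ Z, D.Desc c z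
  | 0, c, h => ⟨c, h, Or.inl rfl⟩
  | (n+1), c, ⟨u, hcu, hr⟩ => by
    obtain ⟨z, hz, hd⟩ := reachN_desc hr
    exact ⟨z, hz, descD_head hcu hd⟩

lemma desc_reachN {D : PDAG V} {Z : Set V} {c z : V} (h : D.Desc c z) (hz : z ∈ Z) :
    ∃ n, ReachN D Z n c := by
  rcases h with rfl | h
  · exact ⟨0, hz⟩
  · induction h using Relation.TransGen.head_induction_on with
    | single h => exact ⟨1, z, h, hz⟩
    | head h _ ih' =>
      obtain ⟨n, hn⟩ := ih'
      exact ⟨n + 1, _, h, hn⟩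

noncomputable def depZ (D : PDAG V) (Z : Set V) (c : V) : ℕ := sInf {n | ReachN D Z n c}

lemma depZ_reach {D : PDAG V} {Z : Set V} {c : V} (h : ∃ n, ReachN D Z n c) :
    ReachN D Z (depZ D Z c) c := Nat.sInf_mem h

lemma depZ_le {D : PDAG V} {Z : Set V} {c : V} {m : ℕ} (h : ReachN D Z m c) :
    depZ D Z c ≤ m := Nat.sInf_le h

lemma depZ_pos {D : PDAG V} {Z : Set V} {c : V} (h : ∃ n, ReachN D Z n c) (hc : c ∉ Z) :
    0 < depZ D Z c := by
  rcases Nat.eq_zero_or_pos (depZ D Z c) with h0 | h0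
  · have := depZ_reach h
    rw [h0] at this
    exact absurd this hc
  · exact h0

/-- collider resolution: either a G-directed route into Z, or an undirected
first step to a strictly shallower node. -/
lemma collider_resolution {G D : PDAG V} {Z : Set V}
    (hG : G.ClosedMeek) (hD : D.IsDAG) (hrep : RepresentedBy D G) :
    ∀ n c, ReachN D Z n c →
      (∃ z ∈ Z, G.Desc c z) ∨
      (∃ u m, G.undirE c u ∧ D.dir c u ∧ m < n ∧ ReachN D Z m u) := by
  intro n
  induction n using Nat.strong_induction_on with
  | _ n ih =>
    intro c hc
    match n, hc with
    | 0, hc => exact Or.inl ⟨c, hc, Or.inl rfl⟩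
    | (k+1), ⟨u1, hcu, hr⟩ =>
      rcases rep_edge hD hrep hcu with hg | hg
      · rcases ih k (by omega) u1 hr with ⟨z, hz, hd⟩ | ⟨u, m, huE, hdu, hm, hru⟩
        · exact Or.inl ⟨z, hz, desc_head hg hd⟩
        · -- G.dir c u1, u1 — u : propagate
          have hadj : G.adj u1 u := Or.inr (Or.inr huE)
          have hacu : G.adj c u := meek_adj hG hg huE
          have hDcu : D.dir c u := by
            rcases dag_dichotomy hD ((rep_adj hrep).mpr hacu) with h | h
            · exact h
            · exact (dir3_acyc hcu hdu h).elim
          rcases rep_edge hD hrep hDcu with hg2 | hg2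
          · rcases ih (m+1) (by omega) c ⟨u, hDcu, hru⟩ with hl | ⟨u', m', h1, h2, h3, h4⟩
            · exact Or.inl hl
            · exact Or.inr ⟨u', m', h1, h2, by omega, h4⟩
          · exact Or.inr ⟨u, m, hg2, hDcu, by omega, hru⟩
      · exact Or.inr ⟨u1, k, hg, hcu, by omega, hr⟩

/- ### chains and cycles -/

lemma chain_transGen {D : PDAG V} {p : List V} (lo : ℕ)
    (hch : ∀ m, lo ≤ m → ∀ h : m + 1 < p.length, D.dir (p[m]'(by omega)) (p[m+1]'h)) :
    ∀ {j : ℕ} (hj : j < p.length) {i : ℕ} (_ : lo ≤ i) (hij : i < j),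
      Relation.TransGen D.dir (p[i]'(by omega)) (p[j]'hj) := by
  intro j
  induction j with
  | zero => intro hj i h1 h2; omega
  | succ j ihj =>
    intro hj i h1 h2
    rcases Nat.lt_or_ge i j with h | h
    · exact (ihj (by omega) h1 h).tail (hch j (by omega) hj)
    · have he : i = j := by omega
      subst he
      exact Relation.TransGen.single (hch i h1 hj)

end PDAG
namespace PDAG
variable {V : Type}

section GSide
variable {G D : PDAG V} {X Y Z : Set V}

lemma mem_tail_exists {q : List V} {v : V} (h : v ∈ q.tail) :
    ∃ i, ∃ hi : i < q.length, 1 ≤ i ∧ v = q[i]'hi := by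
  rw [← List.drop_one, List.mem_iff_getElem] at h
  obtain ⟨i, hi, rfl⟩ := h
  refine ⟨i + 1, by simp [List.length_drop] at hi ⊢; omega, by omega, ?_⟩
  rw [List.getElem_drop]
  exact getElem_idx_congr (by omega) _

lemma mk_isPath {q : List V} (h2 : 2 ≤ q.length) (hnd : q.Nodup)
    (hadj : ∀ m, ∀ h : m + 1 < q.length, G.adj (q[m]'(by omega)) (q[m+1]'h)) :
    G.IsPath q := by
  refine ⟨h2, hnd, ?_⟩
  intro e he
  obtain ⟨i, h, rfl⟩ := mem_consPairs_iff.mp he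
  exact hadj i h

lemma mk_proper {q : List V} (hP : G.IsPath q)
    (hhd : ∀ h : 0 < q.length, q[0]'h ∈ X)
    (hlst : ∀ h : 0 < q.length, q[q.length - 1]'(by omega) ∈ Y)
    (hntl : ∀ i, ∀ h : i < q.length, 1 ≤ i → q[i]'h ∉ X) :
    G.ProperPathFromTo X Y q := by
  have h0 : 0 < q.length := by have := hP.1; omega
  refine ⟨hP, ⟨_, hhd h0, head?_eq_getElem0 h0⟩, ⟨_, hlst h0, getLast?_eq_getElem h0⟩, ?_⟩
  intro v hv
  obtain ⟨i, hi, h1, rfl⟩ := mem_tail_exists hv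
  exact hntl i hi h1

lemma mk_bposs {q : List V} (hP : G.IsPath q)
    (hpairs : ∀ i j : ℕ, ∀ hj : j < q.length, ∀ hij : i < j, ¬ G.dir (q[j]'hj) (q[i]'(by omega))) :
    G.BPossCausal q := by
  refine ⟨hP, ?_⟩
  intro i j hij
  have := hpairs i j j.isLt hij
  simpa [List.get_eq_getElem] using this

lemma bnc_pair {q : List V} (hP : G.IsPath q)
    {i j : ℕ} (hij : i < j) (hj : j < q.length) (hdir : G.dir (q[j]'hj) (q[i]'(by omega))) :
    G.BNonCausal q :=
  ⟨hP, ⟨i, by omega⟩, ⟨j, hj⟩, hij, by simpa [List.get_eq_getElem] using hdir⟩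

lemma fwd_bposs (hD : D.IsDAG) (hrep : RepresentedBy D G) {q : List V}
    (h2 : 2 ≤ q.length) (hnd : q.Nodup)
    (hfwd : ∀ m, ∀ h : m + 1 < q.length, D.dir (q[m]'(by omega)) (q[m+1]'h)) :
    G.BPossCausal q := by
  have hP : G.IsPath q := mk_isPath h2 hnd (fun m h => (rep_adj hrep).mp (dir_adj (hfwd m h)))
  refine mk_bposs hP ?_
  intro i j hj hij hdir
  exact D.acyclic _ ((chain_transGen 0 (fun m _ h => hfwd m h) hj (Nat.zero_le _) hij).tail
    (rep_dir hrep hdir))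

lemma transGen_chain {c z : V} (h : Relation.TransGen D.dir c z) :
    ∃ l : List V, ∃ h2 : 2 ≤ l.length, (l[0]'(by omega)) = c ∧
      (l[l.length - 1]'(by omega)) = z ∧
      ∀ m, ∀ hm : m + 1 < l.length, D.dir (l[m]'(by omega)) (l[m+1]'hm) := by
  induction h using Relation.TransGen.head_induction_on with
  | single h' =>
    rename_i a
    refine ⟨[a, z], by simp, by rfl, by simp, ?_⟩
    intro m hm
    have hm0 : m = 0 := by simp at hm; omega
    subst hm0
    simpa using h'
  | head h1 h2 ih' =>
    rename_i a c0
    obtain ⟨l, hl2, hl0, hlz, hlf⟩ := ih'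
    refine ⟨a :: l, by simp; omega, by rfl, ?_, ?_⟩
    · have h1' : (a :: l).length - 1 = (l.length - 1) + 1 := by simp; omega
      rw [getElem_idx_congr h1' (by simp; omega), List.getElem_cons_succ]
      exact hlz
    · intro m hm
      match m with
      | 0 =>
        simp only [List.getElem_cons_zero, List.getElem_cons_succ]
        rw [hl0]; exact h1
      | (k+1) =>
        simp only [List.getElem_cons_succ]
        exact hlf k (by simp at hm; omega)

lemma transGen_pathList (h : Relation.TransGen D.dir c z) :
    ∃ l : List V, ∃ h2 : 2 ≤ l.length, (l[0]'(by omega)) = c ∧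
      (l[l.length - 1]'(by omega)) = z ∧ l.Nodup ∧
      ∀ m, ∀ hm : m + 1 < l.length, D.dir (l[m]'(by omega)) (l[m+1]'hm) := by
  classical
  have hcz : c ≠ z := fun he => D.acyclic c (he ▸ h)
  set S : Set ℕ := {nn | ∃ l : List V, (∃ h2 : 2 ≤ l.length, (l[0]'(by omega)) = c ∧
      (l[l.length - 1]'(by omega)) = z ∧
      ∀ m, ∀ hm : m + 1 < l.length, D.dir (l[m]'(by omega)) (l[m+1]'hm)) ∧ l.length = nn}
      with hS
  have hne : S.Nonempty := by
    obtain ⟨l, hl⟩ := transGen_chain h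
    exact ⟨l.length, l, hl, rfl⟩
  obtain ⟨l, ⟨hl2, hl0, hlz, hlf⟩, hlen⟩ := Nat.sInf_mem hne
  have hmin : ∀ l' : List V, (∃ h2 : 2 ≤ l'.length, (l'[0]'(by omega)) = c ∧
      (l'[l'.length - 1]'(by omega)) = z ∧
      ∀ m, ∀ hm : m + 1 < l'.length, D.dir (l'[m]'(by omega)) (l'[m+1]'hm)) →
      l.length ≤ l'.length := by
    intro l' hl'
    rw [hlen]
    exact Nat.sInf_le ⟨l', hl', rfl⟩
  by_cases hnd : l.Nodup
  · exact ⟨l, hl2, hl0, hlz, hnd, hlf⟩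
  exfalso
  obtain ⟨i, j, hi, hj, hij, hije⟩ := not_nodup_exists hnd
  by_cases hjl : j = l.length - 1
  · -- truncate
    have hi1 : 1 ≤ i := by
      rcases Nat.eq_zero_or_pos i with h0 | h0
      · subst h0
        exact absurd (hl0.symm.trans (hije.trans (by rw [← hlz]; exact getElem_idx_congr (by omega) _))) hcz
      · exact h0
    have hlen2 : (l.take (i+1)).length = i + 1 := by simp [List.length_take]; omega
    have := hmin (l.take (i+1)) ⟨by omega, ?_, ?_, ?_⟩
    · omega
    · rw [List.getElem_take]; exact hl0
    · have : (l.take (i+1)).length - 1 = i := by omega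
      rw [getElem_idx_congr this (by omega), List.getElem_take]
      rw [hije]
      rw [← hlz]
      exact getElem_idx_congr (by omega) _
    · intro m hm
      rw [hlen2] at hm
      simp only [List.getElem_take]
      exact hlf m (by omega)
  · -- splice
    have hbnd : j + 1 ≤ l.length := by omega
    have hlen2 : (spl l (i+1) (j+1)).length = (i+1) + (l.length - (j+1)) :=
      length_spl (by omega) (by omega)
    have := hmin (spl l (i+1) (j+1)) ⟨by omega, ?_, ?_, ?_⟩
    · omega
    · rw [getElem_spl_left (by omega) (by omega)]; exact hl0
    · have harr : (spl l (i+1) (j+1)).length - 1 - (i+1) + (j+1) = l.length - 1 := by omega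
      rw [getElem_spl_right (by omega) (by omega) (by omega) (by omega)]
      · rw [getElem_idx_congr harr (by omega)]; exact hlz
    · intro m hm
      rw [hlen2] at hm
      rcases Nat.lt_or_ge (m+1) (i+1) with hc | hc
      · rw [getElem_spl_left (by omega) (by omega), getElem_spl_left (by omega) (by omega)]
        exact hlf m (by omega)
      rcases Nat.lt_or_ge m (i+1) with hc2 | hc2
      · -- m = i : junction
        have hmi : m = i := by omega
        rw [getElem_spl_left (by omega) (by omega),
            getElem_spl_right (by omega) (by omega) (by omega) (by omega)]
        rw [getElem_idx_congr (show m + 1 - (i+1) + (j+1) = j + 1 by omega) (by omega)]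
        rw [getElem_idx_congr hmi (by omega), hije]
        exact hlf j (by omega)
      · rw [getElem_spl_right (by omega) (by omega) (by omega) (by omega),
            getElem_spl_right (by omega) (by omega) (by omega) (by omega)]
        have e1 : m + 1 - (i+1) + (j+1) = (m - (i+1) + (j+1)) + 1 := by omega
        rw [getElem_idx_congr e1 (by omega)]
        exact hlf _ (by omega)

lemma desc_bposs (hD : D.IsDAG) (hrep : RepresentedBy D G) {c z : V} (h : D.Desc c z) :
    G.BPossDescNode c z := by
  rcases h with rfl | h
  · exact Or.inl rfl
  · obtain ⟨l, h2, hl0, hlz, hnd, hlf⟩ := transGen_pathList h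
    refine Or.inr ⟨l, fwd_bposs hD hrep h2 hnd hlf, ?_, ?_⟩
    · rw [head?_eq_getElem0 (by omega)]
      exact congrArg some hl0
    · rw [getLast?_eq_getElem (by omega)]
      exact congrArg some hlz

lemma forbKill (hD : D.IsDAG) (hrep : RepresentedBy D G) (hforb : Z ∩ G.BForb X Y = ∅)
    {q : List V} (hprop : G.ProperPathFromTo X Y q) (hbp : G.BPossCausal q)
    {i : ℕ} (hi : 1 ≤ i) (h : i < q.length) {z : V} (hz : z ∈ Z)
    (hdesc : D.Desc (q[i]'h) z) : False := by
  have hwX : q[i]'h ∉ X := hprop.2.2.2 _ (getElem_mem_tail hi h)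
  have hbf : z ∈ G.BForb X Y :=
    ⟨q[i]'h, q, hwX, hprop, hbp, List.getElem_mem h, desc_bposs hD hrep hdesc⟩
  have hmem : z ∈ Z ∩ G.BForb X Y := ⟨hz, hbf⟩
  rw [hforb] at hmem
  exact hmem

lemma blockKill (hblock : G.BBlocking X Y Z) {q : List V}
    (hprop : G.ProperPathFromTo X Y q)
    {i j : ℕ} (hij : i < j) (hj : j < q.length)
    (hdir : G.dir (q[j]'hj) (q[i]'(by omega)))
    (hdef : G.DefiniteStatus q) (hcon : G.DConn q Z) : False :=
  hblock q hprop (bnc_pair hprop.1 hij hj hdir) hdef hcon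

lemma amenUse (hamen : G.BAmenable X Y) {q : List V}
    (hprop : G.ProperPathFromTo X Y q) (hbp : G.BPossCausal q) :
    G.dir (q[0]'(by have := hprop.1.1; omega)) (q[1]'(by have := hprop.1.1; omega)) := by
  have h2 : 2 ≤ q.length := hprop.1.1
  apply hamen q hprop hbp _ _ (head?_eq_getElem0 (by omega))
  have ht : q.tail.head? = some (q.tail[0]'(by simp [List.length_tail]; omega)) :=
    head?_eq_getElem0 _
  rw [ht]
  congr 1
  simp [List.getElem_tail]

lemma mk_defstat {q : List V}
    (h : ∀ j, ∀ hj : j + 2 < q.length,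
      G.ColliderAt ((q[j]'(by omega)), (q[j+1]'(by omega)), (q[j+2]'hj)) ∨
      G.DefNonColliderAt ((q[j]'(by omega)), (q[j+1]'(by omega)), (q[j+2]'hj))) :
    G.DefiniteStatus q := by
  intro t ht
  obtain ⟨j, hj, rfl⟩ := mem_triples_iff.mp ht
  exact h j hj

lemma mk_dconn {q : List V}
    (h : ∀ j, ∀ hj : j + 2 < q.length,
      (G.ColliderAt ((q[j]'(by omega)), (q[j+1]'(by omega)), (q[j+2]'hj)) →
        ∃ z ∈ Z, G.Desc (q[j+1]'(by omega)) z) ∧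
      (¬ G.ColliderAt ((q[j]'(by omega)), (q[j+1]'(by omega)), (q[j+2]'hj)) →
        (q[j+1]'(by omega)) ∉ Z)) :
    G.DConn q Z := by
  intro t ht
  obtain ⟨j, hj, rfl⟩ := mem_triples_iff.mp ht
  exact h j hj

end GSide
end PDAG
namespace PDAG
variable {V : Type}

/-- index-level packaging of: proper X-Y path in `D`, non-causal, d-connecting given `Z`. -/
structure PMem (D : PDAG V) (X Y Z : Set V) (p : List V) : Prop where
  len : 2 ≤ p.length
  nd : p.Nodup
  adj : ∀ m, ∀ h : m + 1 < p.length, D.adj (p[m]'(by omega)) (p[m+1]'h)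
  hd : ∀ h : 0 < p.length, p[0]'h ∈ X
  lst : ∀ h : 0 < p.length, p[p.length - 1]'(by omega) ∈ Y
  ntl : ∀ i, ∀ h : i < p.length, 1 ≤ i → p[i]'h ∉ X
  conn : ∀ t, ∀ h : t + 2 < p.length,
    (D.ColliderAt ((p[t]'(by omega)), (p[t+1]'(by omega)), (p[t+2]'h)) →
      ∃ z ∈ Z, D.Desc (p[t+1]'(by omega)) z) ∧
    (¬ D.ColliderAt ((p[t]'(by omega)), (p[t+1]'(by omega)), (p[t+2]'h)) →
      (p[t+1]'(by omega)) ∉ Z)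
  nc : ∃ m, ∃ h : m + 1 < p.length, D.dir (p[m+1]'h) (p[m]'(by omega))

section PM
variable {G D : PDAG V} {X Y Z : Set V} {p : List V}

lemma pmem_of_defs (h1 : D.ProperPathFromTo X Y p) (h2 : D.NonCausal p)
    (h3 : D.DConn p Z) : PMem D X Y Z p := by
  obtain ⟨hP, ⟨x, hx, hhx⟩, ⟨y, hy, hhy⟩, htl⟩ := h1
  refine ⟨hP.1, hP.2.1, ?_, ?_, ?_, ?_, ?_, ?_⟩
  · exact fun m h => hP.2.2 _ (mem_consPairs_iff.mpr ⟨m, h, rfl⟩)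
  · intro h
    have := (head?_eq_getElem0 h).symm.trans hhx
    rw [Option.some_inj] at this
    rw [this]; exact hx
  · intro h
    have := (getLast?_eq_getElem h).symm.trans hhy
    rw [Option.some_inj] at this
    rw [this]; exact hy
  · exact fun i h hi => htl _ (getElem_mem_tail hi h)
  · exact fun t h => h3 _ (mem_triples_iff.mpr ⟨t, h, rfl⟩)
  · obtain ⟨e, he, hdir⟩ := h2.2
    obtain ⟨m, h, rfl⟩ := mem_consPairs_iff.mp he
    exact ⟨m, h, hdir⟩

lemma pmem_isPathG (hrep : RepresentedBy D G) (hp : PMem D X Y Z p) : G.IsPath p :=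
  mk_isPath hp.len hp.nd (fun m h => (rep_adj hrep).mp (hp.adj m h))

lemma pmem_properG (hrep : RepresentedBy D G) (hp : PMem D X Y Z p) :
    G.ProperPathFromTo X Y p :=
  mk_proper (pmem_isPathG hrep hp) hp.hd hp.lst hp.ntl

lemma pmem_fwd_causal_kill (hD : D.IsDAG) (hrep : RepresentedBy D G)
    (hforb : Z ∩ G.BForb X Y = ∅) (hp : PMem D X Y Z p)
    (hfwd : ∀ m, ∀ h : m + 1 < p.length, D.dir (p[m]'(by omega)) (p[m+1]'h))
    {i : ℕ} (hi : 1 ≤ i) (h : i < p.length) {z : V} (hz : z ∈ Z)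
    (hdesc : D.Desc (p[i]'h) z) : False :=
  forbKill hD hrep hforb (pmem_properG hrep hp) (fwd_bposs hD hrep hp.len hp.nd hfwd)
    hi h hz hdesc

open Classical in
/-- sum over collider positions (not in `Z`) of their distance to `Z`. -/
noncomputable def muDZ (D : PDAG V) (Z : Set V) (p : List V) : ℕ :=
  ∑ j ∈ Finset.range p.length,
    if h : j + 2 < p.length then
      (if D.dir (p[j]'(by omega)) (p[j+1]'(by omega)) ∧
          D.dir (p[j+2]'h) (p[j+1]'(by omega)) ∧ (p[j+1]'(by omega)) ∉ Z
       then depZ D Z (p[j+1]'(by omega)) else 0)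
    else 0

/-- the key erase-one-node surgery on a shielded triple. -/
lemma lemE (hD : D.IsDAG) (hp : PMem D X Y Z p) {t : ℕ} (ht : t + 2 < p.length)
    (hsh : D.adj (p[t]'(by omega)) (p[t+2]'ht))
    (hF1 : ¬ ∃ s, t = s + 1 ∧ ∃ hs : s + 3 < p.length, (p[s+1]'(by omega)) ∈ Z ∧
        D.dir (p[s]'(by omega)) (p[s+1]'(by omega)) ∧
        D.dir (p[s+2]'(by omega)) (p[s+1]'(by omega)) ∧
        D.dir (p[s+1]'(by omega)) (p[s+3]'hs))
    (hF2 : ¬ ∃ h3 : t + 3 < p.length, (p[t+2]'ht) ∈ Z ∧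
        D.dir (p[t+1]'(by omega)) (p[t+2]'ht) ∧ D.dir (p[t+3]'h3) (p[t+2]'ht) ∧
        D.dir (p[t+2]'ht) (p[t]'(by omega)))
    (hCA : ¬ (D.dir (p[t]'(by omega)) (p[t+2]'ht) ∧
        ∀ m, ∀ h : m + 1 < p.length, m ≠ t → m ≠ t + 1 →
          D.dir (p[m]'(by omega)) (p[m+1]'h))) :
    PMem D X Y Z (spl p (t+1) (t+2)) := by
  have hn : 2 ≤ p.length := hp.len
  set p' := spl p (t+1) (t+2) with hp'
  have hlen' : p'.length = p.length - 1 := by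
    rw [hp', length_spl (by omega) (by omega)]; omega
  have hgL : ∀ m, m ≤ t → ∀ hm' : m < p'.length, p'[m]'hm' = p[m]'(by omega) := by
    intro m hmt hm'
    exact getElem_spl_left (by omega) (by omega)
  have hgR : ∀ m (_ : t + 1 ≤ m) (hm' : m < p'.length),
      p'[m]'hm' = p[m+1]'(by rw [hlen'] at hm'; omega) := by
    intro m hmt hm'
    have h2 : m - (t+1) + (t+2) < p.length := by rw [hlen'] at hm'; omega
    have hx := getElem_spl_right (p := p) (a := t+1) (b := t+2) (m := m) hmt
      (by omega) (by omega) h2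
    rw [getElem_idx_congr (show m - (t+1) + (t+2) = m + 1 by omega) (by omega)] at hx
    exact hx
  refine ⟨?_, ?_, ?_, ?_, ?_, ?_, ?_, ?_⟩
  · rw [hlen']; omega
  · exact nodup_spl (by omega) hp.nd
  · -- adjacency
    intro m h
    rcases (by omega : m + 1 ≤ t ∨ m = t ∨ t + 1 ≤ m) with hc | hc | hc
    · rw [hgL m (by omega), hgL (m+1) (by omega)]
      exact hp.adj m (by omega)
    · subst hc
      rw [hgL m (by omega), hgR (m+1) (by omega)]
      exact hsh
    · rw [hgR m (by omega), hgR (m+1) (by omega)]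
      exact hp.adj (m+1) (by rw [hlen'] at h; omega)
  · intro h
    rw [hgL 0 (by omega)]
    exact hp.hd (by omega)
  · intro h
    rw [hgR (p'.length - 1) (by rw [hlen']; omega)]
    rw [getElem_idx_congr (by rw [hlen']; omega : p'.length - 1 + 1 = p.length - 1) (by omega)]
    exact hp.lst (by omega)
  · intro i h hi
    rcases (by omega : i ≤ t ∨ t + 1 ≤ i) with hc | hc
    · rw [hgL i hc]
      exact hp.ntl i (by omega) hi
    · rw [hgR i hc]
      exact hp.ntl (i+1) (by rw [hlen'] at h; omega) (by omega)
  · -- d-connection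
    intro j hj
    have hj3 : j + 3 < p.length := by rw [hlen'] at hj; omega
    rcases (by omega : j + 2 ≤ t ∨ j + 1 = t ∨ j = t ∨ t + 1 ≤ j) with hc | hc | hc | hc
    · rw [hgL j (by omega), hgL (j+1) (by omega), hgL (j+2) (by omega)]
      exact hp.conn j (by omega)
    · -- middle-a : t = j+1
      obtain rfl : t = j + 1 := by omega
      rw [hgL j (by omega), hgL (j+1) (by omega), hgR (j+2) (by omega)]
      rw [getElem_idx_congr (by omega : j + 2 + 1 = j + 3) (by omega)]
      have he : D.adj (p[j+1]'(by omega)) (p[j+3]'(by omega)) := by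
        have := hsh
        rwa [getElem_idx_congr (by omega : j + 1 + 2 = j + 3) (by omega)] at this
      rcases dag_dichotomy hD he with hef | heb
      · constructor
        · intro hcol
          exact absurd hcol.2 (dir_asymm (by
            rwa [getElem_idx_congr (by omega : j + 2 + 1 = j + 3) (by omega)] ))
        · intro _
          by_cases hpc : D.dir (p[j]'(by omega)) (p[j+1]'(by omega)) ∧
              D.dir (p[j+2]'(by omega)) (p[j+1]'(by omega))
          · intro hzmem
            exact hF1 ⟨j, rfl, by omega, hzmem, hpc.1, hpc.2, hef⟩
          · exact (hp.conn j (by omega)).2 (fun hc => hpc ⟨hc.1, hc.2⟩)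
      · by_cases hLin : D.dir (p[j]'(by omega)) (p[j+1]'(by omega))
        · constructor
          · intro _
            by_cases hc2 : D.dir (p[j+2]'(by omega)) (p[j+1]'(by omega))
            · exact (hp.conn j (by omega)).1 ⟨hLin, hc2⟩
            · have hfwd12 : D.dir (p[j+1]'(by omega)) (p[j+2]'(by omega)) :=
                (dag_dichotomy hD (hp.adj (j+1) (by omega))).resolve_right hc2
              by_cases hc3 : D.dir (p[j+3]'(by omega)) (p[j+2]'(by omega))
              · obtain ⟨z, hz, hdz⟩ := (hp.conn (j+1) (by omega)).1 ⟨hfwd12, by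
                  rwa [getElem_idx_congr (by omega : j + 1 + 2 = j + 3) (by omega)]⟩
                exact ⟨z, hz, descD_head hfwd12 (by
                  rwa [getElem_idx_congr (by omega : j + 1 + 1 = j + 2) (by omega)] at hdz)⟩
              · have h23 : D.dir (p[j+2]'(by omega)) (p[j+3]'(by omega)) :=
                  (dag_dichotomy hD (by
                    have := hp.adj (j+2) (by omega)
                    rwa [getElem_idx_congr (by omega : j + 2 + 1 = j + 3) (by omega)] at this
                    )).resolve_right hc3
                exact (dir3_acyc hfwd12 h23 heb).elim
          · intro hnc
            exact (hnc ⟨hLin, heb⟩).elim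
        · constructor
          · intro hcol
            exact (hLin hcol.1).elim
          · intro _
            exact (hp.conn j (by omega)).2 (fun hc => hLin hc.1)
    · -- middle-b : j = t
      subst hc
      rw [hgL j (by omega), hgR (j+1) (by omega), hgR (j+2) (by omega)]
      rw [getElem_idx_congr (by omega : j + 1 + 1 = j + 2) (by omega),
          getElem_idx_congr (by omega : j + 2 + 1 = j + 3) (by omega)]
      rcases dag_dichotomy hD hsh with hef | heb
      · by_cases hRin : D.dir (p[j+3]'(by omega)) (p[j+2]'(by omega))
        · constructor
          · intro _
            by_cases hc1 : D.dir (p[j+1]'(by omega)) (p[j+2]'(by omega))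
            · have := (hp.conn (j+1) (by omega)).1 ⟨hc1, by
                rwa [getElem_idx_congr (by omega : j + 1 + 2 = j + 3) (by omega)]⟩
              rwa [getElem_idx_congr (by omega : j + 1 + 1 = j + 2) (by omega)] at this
            · have h21 : D.dir (p[j+2]'(by omega)) (p[j+1]'(by omega)) :=
                (dag_dichotomy hD (hp.adj (j+1) (by omega))).resolve_left hc1
              by_cases hc0 : D.dir (p[j]'(by omega)) (p[j+1]'(by omega))
              · obtain ⟨z, hz, hdz⟩ := (hp.conn j (by omega)).1 ⟨hc0, h21⟩
                exact ⟨z, hz, descD_head h21 hdz⟩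
              · have h10 : D.dir (p[j+1]'(by omega)) (p[j]'(by omega)) :=
                  (dag_dichotomy hD (hp.adj j (by omega))).resolve_left hc0
                exact (dir3_acyc hef h21 h10).elim
          · intro hnc
            exact (hnc ⟨hef, hRin⟩).elim
        · constructor
          · intro hcol
            exact (hRin hcol.2).elim
          · intro _
            have := (hp.conn (j+1) (by omega)).2 (fun hc => hRin (by
              have := hc.2
              rwa [getElem_idx_congr (by omega : j + 1 + 2 = j + 3) (by omega)] at this))
            rwa [getElem_idx_congr (by omega : j + 1 + 1 = j + 2) (by omega)] at this
      · constructor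
        · intro hcol
          exact (dir_asymm heb hcol.1).elim
        · intro _
          by_cases hpc : D.dir (p[j+1]'(by omega)) (p[j+2]'(by omega)) ∧
              D.dir (p[j+3]'(by omega)) (p[j+2]'(by omega))
          · intro hmem
            exact hF2 ⟨by omega, hmem, hpc.1, hpc.2, heb⟩
          · have := (hp.conn (j+1) (by omega)).2 (fun hc => hpc ⟨hc.1, by
              have := hc.2
              rwa [getElem_idx_congr (by omega : j + 1 + 2 = j + 3) (by omega)] at this⟩)
            rwa [getElem_idx_congr (by omega : j + 1 + 1 = j + 2) (by omega)] at this
    · -- pure right copy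
      rw [hgR j (by omega), hgR (j+1) (by omega), hgR (j+2) (by omega)]
      rw [getElem_idx_congr (by omega : j + 1 + 1 = j + 2) (by omega),
          getElem_idx_congr (by omega : j + 2 + 1 = j + 3) (by omega)]
      exact hp.conn (j+1) (by omega)
  · -- non-causality
    by_cases hrev : D.dir (p[t+2]'ht) (p[t]'(by omega))
    · refine ⟨t, by rw [hlen']; omega, ?_⟩
      rw [hgL t (by omega), hgR (t+1) (by omega)]
      rwa [getElem_idx_congr (by omega : t + 1 + 1 = t + 2) (by omega)]
    · have hef : D.dir (p[t]'(by omega)) (p[t+2]'ht) :=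
        (dag_dichotomy hD hsh).resolve_right hrev
      have hB : ¬ ∀ m, ∀ h : m + 1 < p.length, m ≠ t → m ≠ t + 1 →
          D.dir (p[m]'(by omega)) (p[m+1]'h) := fun hB => hCA ⟨hef, hB⟩
      push_neg at hB
      obtain ⟨m, h, hm1, hm2, hnd⟩ := hB
      have hbk : D.dir (p[m+1]'h) (p[m]'(by omega)) :=
        (dag_dichotomy hD (hp.adj m h)).resolve_left hnd
      rcases (by omega : m + 1 ≤ t ∨ t + 1 ≤ m) with hc | hc
      · refine ⟨m, by rw [hlen']; omega, ?_⟩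
        rw [hgL m (by omega), hgL (m+1) (by omega)]
        exact hbk
      · obtain ⟨m', rfl⟩ : ∃ m', m = m' + 1 := ⟨m - 1, by omega⟩
        refine ⟨m', by rw [hlen']; omega, ?_⟩
        rw [hgR m' (by omega), hgR (m'+1) (by omega)]
        rw [getElem_idx_congr (by omega : m' + 1 + 1 = m' + 2) (by omega)]
        have := hbk
        rwa [getElem_idx_congr (by omega : m' + 1 + 1 = m' + 2) (by omega)] at this

end PM
end PDAG
namespace PDAG
variable {V : Type}

section B1
variable {G D : PDAG V} {X Y Z : Set V}

lemma lemB1 (hG : G.ClosedMeek) (hD : D.IsDAG) (hrep : RepresentedBy D G)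
    (hamen : G.BAmenable X Y) (hblock : G.BBlocking X Y Z)
    {p : List V} (hp : PMem D X Y Z p)
    (hmin : ∀ q, PMem D X Y Z q → p.length ≤ q.length)
    (hn3 : 3 ≤ p.length)
    (hb : D.dir (p[1]'(by omega)) (p[0]'(by omega)))
    (hf : ∀ m, 1 ≤ m → ∀ h : m + 1 < p.length, D.dir (p[m]'(by omega)) (p[m+1]'h)) :
    False := by
  have b1a : ∀ t, ∀ h : t + 2 < p.length,
      ¬ (D.dir (p[t]'(by omega)) (p[t+1]'(by omega)) ∧
         D.dir (p[t+2]'h) (p[t+1]'(by omega))) := by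
    intro t h hcc
    match t with
    | 0 => exact dir_asymm hb hcc.1
    | (s+1) => exact dir_asymm (hf (s+2) (by omega) (by omega)) hcc.2
  have b1z : ∀ s, ∀ h : s + 2 < p.length, (p[s+1]'(by omega)) ∉ Z := by
    intro s h
    exact (hp.conn s h).2 (fun hc => b1a s h ⟨hc.1, hc.2⟩)
  have b1b : ∀ s, 1 ≤ s → ∀ h : s + 2 < p.length,
      ¬ D.adj (p[s]'(by omega)) (p[s+2]'h) := by
    intro s hs h hadj
    have hpm := lemE hD hp h hadj ?_ ?_ ?_
    · have h2 := hmin _ hpm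
      rw [length_spl (by omega) (by omega)] at h2
      omega
    · rintro ⟨s', hss', hs3, _, hd1, hd2, _⟩
      exact b1a s' (by omega) ⟨hd1, hd2⟩
    · rintro ⟨h3, _, hd1, hd2, _⟩
      exact b1a (s+1) (by omega) ⟨hd1, hd2⟩
    · rintro ⟨_, hall⟩
      exact dir_asymm hb (hall 0 (by omega) (by omega) (by omega))
  have hnGcol : ∀ j, ∀ hj : j + 2 < p.length,
      ¬ G.ColliderAt ((p[j]'(by omega)), (p[j+1]'(by omega)), (p[j+2]'hj)) := by
    intro j hj hcol
    exact b1a j hj ⟨rep_dir hrep hcol.1, rep_dir hrep hcol.2⟩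
  have hGadj : G.adj (p[0]'(by omega)) (p[1]'(by omega)) :=
    (rep_adj hrep).mp (hp.adj 0 (by omega))
  rcases hGadj with hg | hg | hg
  · exact dir_asymm hb (rep_dir hrep hg)
  · -- G-directed backwards : feed the b-blocking condition with p itself
    refine blockKill hblock (pmem_properG hrep hp) (show (0:ℕ) < 1 by omega) (by omega) hg
      (mk_defstat ?_) (mk_dconn ?_)
    · intro j hj
      match j with
      | 0 => exact Or.inr (Or.inl hg)
      | (s+1) =>
        refine Or.inr (meek_unshielded hG ?_ ?_ ?_ ?_)
        · exact (rep_adj hrep).mp (hp.adj (s+1) (by omega))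
        · exact (rep_adj hrep).mp (hp.adj (s+2) (by omega))
        · intro hadj
          exact b1b (s+1) (by omega) (by omega) ((rep_adj hrep).mpr hadj)
        · intro hcc
          exact b1a (s+1) (by omega) ⟨rep_dir hrep hcc.1, rep_dir hrep hcc.2⟩
    · intro j hj
      exact ⟨fun hcol => (hnGcol j hj hcol).elim, fun _ => b1z j hj⟩
  · -- undirected first edge
    by_cases hbk : ∃ jj, ∃ hjj : jj < p.length, 2 ≤ jj ∧ G.dir (p[jj]'hjj) (p[0]'(by omega))
    · obtain ⟨jj, hjj, hjj2, hdjj⟩ := hbk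
      obtain ⟨s0, rfl⟩ : ∃ s0, jj = s0 + 2 := ⟨jj - 2, by omega⟩
      set w : List V := (p[0]'(by omega)) :: p.drop (s0+2) with hw
      have hwlen : w.length = 1 + (p.length - (s0+2)) := by
        simp only [hw, List.length_cons, List.length_drop]
        omega
      have hw0 : ∀ h : 0 < w.length, w[0]'h = p[0]'(by omega) := fun _ => rfl
      have hwS : ∀ m, ∀ h : m + 1 < w.length, w[m+1]'h = p[s0+2+m]'(by
          rw [hwlen] at h; omega) := by
        intro m h
        show (p.drop (s0+2))[m]'(by rw [hwlen] at h; simp [List.length_drop]; omega) = _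
        rw [List.getElem_drop]
      have hwpath : G.IsPath w := by
        refine mk_isPath (by rw [hwlen]; omega) ?_ ?_
        · refine List.nodup_cons.mpr ⟨?_, hp.nd.sublist (List.drop_sublist _ _)⟩
          intro hmem
          rw [List.mem_iff_getElem] at hmem
          obtain ⟨k, hk, hke⟩ := hmem
          rw [List.getElem_drop] at hke
          have := hp.nd.getElem_inj_iff.mp hke
          omega
        · intro m h
          match m with
          | 0 =>
            rw [hw0, hwS 0 (by omega)]
            exact adj_symm (dir_adj (by
              have := hdjj
              rwa [getElem_idx_congr (by omega : s0 + 2 = s0 + 2 + 0) (by omega)] at this))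
          | (k+1) =>
            rw [hwS k (by omega), hwS (k+1) (by omega)]
            have := (rep_adj hrep).mp (hp.adj (s0+2+k) (by rw [hwlen] at h; omega))
            rwa [getElem_idx_congr (by omega : s0 + 2 + k + 1 = s0 + 2 + (k+1)) (by omega)]
              at this
      have hwprop : G.ProperPathFromTo X Y w := by
        refine mk_proper hwpath ?_ ?_ ?_
        · intro h; rw [hw0]; exact hp.hd (by omega)
        · intro h
          have hl1 : w.length - 1 = (w.length - 2) + 1 := by rw [hwlen]; omega
          rw [getElem_idx_congr hl1 (by omega), hwS (w.length - 2) (by omega)]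
          rw [getElem_idx_congr (by rw [hwlen]; omega :
            s0 + 2 + (w.length - 2) = p.length - 1) (by omega)]
          exact hp.lst (by omega)
        · intro i h hi
          obtain ⟨k, rfl⟩ : ∃ k, i = k + 1 := ⟨i - 1, by omega⟩
          rw [hwS k (by omega)]
          exact hp.ntl _ _ (by omega)
      refine blockKill hblock hwprop (show (0:ℕ) < 1 by omega) (by rw [hwlen]; omega) ?_
        (mk_defstat ?_) (mk_dconn ?_)
      · rw [hw0, hwS 0 (by omega)]
        rwa [getElem_idx_congr (by omega : s0 + 2 + 0 = s0 + 2) (by omega)]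
      · intro j hj
        match j with
        | 0 =>
          refine Or.inr (Or.inl ?_)
          show G.dir (w[1]'(by omega)) (w[0]'(by omega))
          rw [hw0, hwS 0 (by omega)]
          rwa [getElem_idx_congr (by omega : s0 + 2 + 0 = s0 + 2) (by omega)]
        | (k+1) =>
          rw [hwS k (by omega), hwS (k+1) (by omega), hwS (k+2) (by omega)]
          refine Or.inr (meek_unshielded hG ?_ ?_ ?_ ?_)
          · have := (rep_adj hrep).mp (hp.adj (s0+2+k) (by rw [hwlen] at hj; omega))
            rwa [getElem_idx_congr (by omega : s0 + 2 + k + 1 = s0 + 2 + (k+1)) (by omega)]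
              at this
          · have := (rep_adj hrep).mp (hp.adj (s0+2+(k+1)) (by rw [hwlen] at hj; omega))
            rwa [getElem_idx_congr (by omega : s0 + 2 + (k+1) + 1 = s0 + 2 + (k+2)) (by omega)]
              at this
          · intro hadj
            refine b1b (s0+2+k) (by omega) (by rw [hwlen] at hj; omega) ?_
            have := (rep_adj hrep).mpr hadj
            rwa [getElem_idx_congr (by omega : s0 + 2 + (k+2) = s0 + 2 + k + 2) (by omega)]
              at this
          · intro hcc
            refine b1a (s0+2+k) (by rw [hwlen] at hj; omega) ⟨rep_dir hrep ?_, rep_dir hrep ?_⟩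
            · have := hcc.1
              rwa [getElem_idx_congr (by omega : s0 + 2 + (k+1) = s0 + 2 + k + 1) (by omega)]
                at this
            · have := hcc.2
              rwa [getElem_idx_congr (by omega : s0 + 2 + (k+2) = s0 + 2 + k + 2) (by omega),
                getElem_idx_congr (by omega : s0 + 2 + (k+1) = s0 + 2 + k + 1) (by omega)]
                at this
      · intro j hj
        constructor
        · intro hcol
          exfalso
          match j with
          | 0 =>
            have h1 := hcol.1
            rw [hw0, hwS 0 (by omega)] at h1
            have h2 := hdjj
            rw [getElem_idx_congr (by omega : s0 + 2 = s0 + 2 + 0) (by omega)] at h2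
            exact G.acyclic _ ((Relation.TransGen.single h1).tail h2)
          | (k+1) =>
            rw [hwS k (by omega), hwS (k+1) (by omega), hwS (k+2) (by omega)] at hcol
            refine b1a (s0+2+k) (by rw [hwlen] at hj; omega)
              ⟨rep_dir hrep ?_, rep_dir hrep ?_⟩
            · have := hcol.1
              rwa [getElem_idx_congr (by omega : s0 + 2 + (k+1) = s0 + 2 + k + 1) (by omega)]
                at this
            · have := hcol.2
              rwa [getElem_idx_congr (by omega : s0 + 2 + (k+2) = s0 + 2 + k + 2) (by omega),
                getElem_idx_congr (by omega : s0 + 2 + (k+1) = s0 + 2 + k + 1) (by omega)]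
                at this
        · intro _
          match j with
          | 0 =>
            rw [hwS 0 (by omega)]
            have := b1z (s0+1) (by rw [hwlen] at hj; omega)
            rwa [getElem_idx_congr (by omega : s0 + 1 + 1 = s0 + 2 + 0) (by omega)] at this
          | (k+1) =>
            rw [hwS (k+1) (by omega)]
            have := b1z (s0+2+k) (by rw [hwlen] at hj; omega)
            rwa [getElem_idx_congr (by omega : s0 + 2 + k + 1 = s0 + 2 + (k+1)) (by omega)]
              at this
    · -- no backward pair : p is b-possibly causal, contradict amenability
      have hbposs : G.BPossCausal p := by
        refine mk_bposs (pmem_isPathG hrep hp) ?_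
        intro i j hj hij hdir
        match i with
        | 0 =>
          match j, hij with
          | 1, _ => exact dir_not_undirE hdir (undirE_symm hg)
          | (k+2), _ => exact hbk ⟨k+2, hj, by omega, hdir⟩
        | (s+1) =>
          exact D.acyclic _ ((chain_transGen 1 (fun m hm h => hf m hm h) hj (by omega) hij).tail
            (rep_dir hrep hdir))
      exact dir_not_undirE (amenUse hamen (pmem_properG hrep hp) hbposs) hg

end B1
end PDAG
namespace PDAG
variable {V : Type}

section AB
variable {G D : PDAG V} {X Y Z : Set V}

/-- the causal-shortcut horn: the spliced path is fully directed in `D`, so any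
`Z`-hit among descendants of its non-initial nodes contradicts the forbidden set. -/
lemma lemCAkill (hD : D.IsDAG) (hrep : RepresentedBy D G)
    (hforb : Z ∩ G.BForb X Y = ∅) {p : List V} (hp : PMem D X Y Z p)
    {t : ℕ} (ht : t + 2 < p.length)
    (hCA1 : D.dir (p[t]'(by omega)) (p[t+2]'ht))
    (hCA2 : ∀ m, ∀ h : m + 1 < p.length, m ≠ t → m ≠ t + 1 →
      D.dir (p[m]'(by omega)) (p[m+1]'h))
    {i : ℕ} (hi : 1 ≤ i) (hip : i < p.length) (hne : i ≠ t + 1)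
    {z : V} (hz : z ∈ Z) (hdesc : D.Desc (p[i]'hip) z) : False := by
  have hn : 2 ≤ p.length := hp.len
  have hlen' : (spl p (t+1) (t+2)).length = p.length - 1 := by
    rw [length_spl (by omega) (by omega)]; omega
  have hgL : ∀ m, m ≤ t → ∀ hm' : m < (spl p (t+1) (t+2)).length,
      (spl p (t+1) (t+2))[m]'hm' = p[m]'(by omega) := by
    intro m hmt hm'
    exact getElem_spl_left (by omega) (by omega)
  have hgR : ∀ m (_ : t + 1 ≤ m) (hm' : m < (spl p (t+1) (t+2)).length),
      (spl p (t+1) (t+2))[m]'hm' = p[m+1]'(by rw [hlen'] at hm'; omega) := by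
    intro m hmt hm'
    have h2 : m - (t+1) + (t+2) < p.length := by rw [hlen'] at hm'; omega
    have hx := getElem_spl_right (p := p) (a := t+1) (b := t+2) (m := m) hmt
      (by omega) (by omega) h2
    rw [getElem_idx_congr (show m - (t+1) + (t+2) = m + 1 by omega) (by omega)] at hx
    exact hx
  have hfwd : ∀ m, ∀ h : m + 1 < (spl p (t+1) (t+2)).length,
      D.dir ((spl p (t+1) (t+2))[m]'(by omega)) ((spl p (t+1) (t+2))[m+1]'h) := by
    intro m h
    rcases (by omega : m + 1 ≤ t ∨ m = t ∨ t + 1 ≤ m) with hc | hc | hc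
    · rw [hgL m (by omega), hgL (m+1) (by omega)]
      exact hCA2 m (by omega) (by omega) (by omega)
    · subst hc
      rw [hgL m (by omega), hgR (m+1) (by omega)]
      exact hCA1
    · rw [hgR m (by omega), hgR (m+1) (by omega)]
      exact hCA2 (m+1) (by rw [hlen'] at h; omega) (by omega) (by omega)
  have hbp : G.BPossCausal (spl p (t+1) (t+2)) :=
    fwd_bposs hD hrep (by omega) (nodup_spl (by omega) hp.nd) hfwd
  have hprop : G.ProperPathFromTo X Y (spl p (t+1) (t+2)) := by
    refine mk_proper hbp.1 ?_ ?_ ?_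
    · intro h
      rw [hgL 0 (by omega)]
      exact hp.hd (by omega)
    · intro h
      rw [hgR ((spl p (t+1) (t+2)).length - 1) (by rw [hlen']; omega)]
      rw [getElem_idx_congr (by rw [hlen']; omega :
        (spl p (t+1) (t+2)).length - 1 + 1 = p.length - 1) (by omega)]
      exact hp.lst (by omega)
    · intro i2 h hi2
      rcases (by omega : i2 ≤ t ∨ t + 1 ≤ i2) with hc | hc
      · rw [hgL i2 hc]
        exact hp.ntl i2 (by omega) hi2
      · rw [hgR i2 hc]
        exact hp.ntl (i2+1) (by rw [hlen'] at h; omega) (by omega)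
  -- locate i inside the spliced list
  rcases (by omega : i ≤ t ∨ t + 2 ≤ i) with hc | hc
  · refine forbKill hD hrep hforb hprop hbp hi (show i < (spl p (t+1) (t+2)).length by
      rw [hlen']; omega) hz ?_
    rw [hgL i (by omega)]
    exact hdesc
  · obtain ⟨i', rfl⟩ : ∃ i', i = i' + 1 := ⟨i - 1, by omega⟩
    refine forbKill hD hrep hforb hprop hbp (i := i') (by omega)
      (show i' < (spl p (t+1) (t+2)).length by rw [hlen']; omega) hz ?_
    rw [hgR i' (by omega)]
    exact hdesc

/-- every shielded collider triple on a minimal path is impossible. -/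
lemma lemA1 (hD : D.IsDAG) (hrep : RepresentedBy D G)
    (hforb : Z ∩ G.BForb X Y = ∅) {p : List V} (hp : PMem D X Y Z p)
    (hmin : ∀ q, PMem D X Y Z q → p.length ≤ q.length)
    {t : ℕ} (ht : t + 2 < p.length)
    (hcol : D.dir (p[t]'(by omega)) (p[t+1]'(by omega)) ∧
      D.dir (p[t+2]'ht) (p[t+1]'(by omega)))
    (hsh : D.adj (p[t]'(by omega)) (p[t+2]'ht)) : False := by
  have hpm := lemE hD hp ht hsh ?_ ?_ ?_
  · have h2 := hmin _ hpm
    rw [length_spl (by omega) (by omega)] at h2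
    omega
  · rintro ⟨s, hts, hs3, _, _, hd2, _⟩
    subst hts
    exact dir_asymm hcol.1 hd2
  · rintro ⟨h3, _, hd1, _, _⟩
    exact dir_asymm hcol.2 hd1
  · rintro ⟨h1, h2⟩
    obtain ⟨z, hz, hdz⟩ := (hp.conn t ht).1 ⟨hcol.1, hcol.2⟩
    exact lemCAkill hD hrep hforb hp ht h1 h2 (i := t+2) (by omega) (by omega) (by omega)
      hz (descD_head hcol.2 hdz)

/-- main dichotomy: a shielded non-collider triple on a minimal path forces the
F1 or F2 configuration. -/
lemma lemB (hG : G.ClosedMeek) (hD : D.IsDAG) (hrep : RepresentedBy D G)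
    (hamen : G.BAmenable X Y) (hforb : Z ∩ G.BForb X Y = ∅) (hblock : G.BBlocking X Y Z)
    {p : List V} (hp : PMem D X Y Z p)
    (hmin : ∀ q, PMem D X Y Z q → p.length ≤ q.length)
    {t : ℕ} (ht : t + 2 < p.length)
    (hsh : D.adj (p[t]'(by omega)) (p[t+2]'ht))
    (hncol : ¬ (D.dir (p[t]'(by omega)) (p[t+1]'(by omega)) ∧
      D.dir (p[t+2]'ht) (p[t+1]'(by omega)))) :
    (∃ s, t = s + 1 ∧ ∃ hs : s + 3 < p.length, (p[s+1]'(by omega)) ∈ Z ∧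
        D.dir (p[s]'(by omega)) (p[s+1]'(by omega)) ∧
        D.dir (p[s+2]'(by omega)) (p[s+1]'(by omega)) ∧
        D.dir (p[s+1]'(by omega)) (p[s+3]'hs)) ∨
    (∃ h3 : t + 3 < p.length, (p[t+2]'ht) ∈ Z ∧
        D.dir (p[t+1]'(by omega)) (p[t+2]'ht) ∧ D.dir (p[t+3]'h3) (p[t+2]'ht) ∧
        D.dir (p[t+2]'ht) (p[t]'(by omega))) := by
  by_contra hno
  rw [not_or] at hno
  obtain ⟨hF1, hF2⟩ := hno
  refine absurd (lemE hD hp ht hsh hF1 hF2 ?_)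
    (fun hpm => by
      have h2 := hmin _ hpm
      rw [length_spl (by omega) (by omega)] at h2
      omega)
  rintro ⟨h1, h2⟩
  by_cases het : D.dir (p[t]'(by omega)) (p[t+1]'(by omega))
  · by_cases het1 : D.dir (p[t+1]'(by omega)) (p[t+2]'ht)
    · -- everything forward : contradicts non-causality
      have hall : ∀ m, ∀ h : m + 1 < p.length, D.dir (p[m]'(by omega)) (p[m+1]'h) := by
        intro m h
        by_cases hm1 : m = t
        · subst hm1; exact het
        by_cases hm2 : m = t + 1
        · subst hm2; exact het1
        · exact h2 m h hm1 hm2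
      obtain ⟨m, h, hbkm⟩ := hp.nc
      exact dir_asymm (hall m h) hbkm
    · exact hncol ⟨het, (dag_dichotomy hD (hp.adj (t+1) (by omega))).resolve_left het1⟩
  · have hbt : D.dir (p[t+1]'(by omega)) (p[t]'(by omega)) :=
      (dag_dichotomy hD (hp.adj t (by omega))).resolve_left het
    by_cases het1 : D.dir (p[t+1]'(by omega)) (p[t+2]'ht)
    · match t, ht, hsh, h1, h2, hbt, het1 with
      | 0, ht, hsh, h1, h2, hbt, het1 =>
        refine lemB1 hG hD hrep hamen hblock hp hmin (by omega) hbt ?_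
        intro m hm h
        by_cases hm1 : m = 1
        · subst hm1; exact het1
        · exact h2 m h (by omega) (by omega)
      | (s+1), ht, hsh, h1, h2, hbt, het1 =>
        have hcolS : D.dir (p[s]'(by omega)) (p[s+1]'(by omega)) ∧
            D.dir (p[s+2]'(by omega)) (p[s+1]'(by omega)) :=
          ⟨h2 s (by omega) (by omega) (by omega), hbt⟩
        obtain ⟨z, hz, hdz⟩ := (hp.conn s (by omega)).1 ⟨hcolS.1, hcolS.2⟩
        exact lemCAkill hD hrep hforb hp ht h1 h2 (i := s+1) (by omega) (by omega)
          (by omega) hz hdz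
    · have hbt1 : D.dir (p[t+2]'ht) (p[t+1]'(by omega)) :=
        (dag_dichotomy hD (hp.adj (t+1) (by omega))).resolve_left het1
      exact dir3_acyc h1 hbt1 hbt

end AB
end PDAG
namespace PDAG
variable {V : Type}

section C1
variable {G D : PDAG V} {X Y Z : Set V}

lemma ite_lt_ite {A B : Prop} [Decidable A] [Decidable B] {a b : ℕ}
    (hB : B) (h1 : A → a < b) (h2 : 0 < b) :
    (if A then a else 0) < (if B then b else 0) := by
  rw [if_pos hB]
  split_ifs with hA
  exacts [h1 hA, h2]

lemma take_disjoint_cons_drop {p : List V} {u : V} (hnd : p.Nodup) (hu : u ∉ p)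
    {a b : ℕ} (hab : a ≤ b) (hbl : b ≤ p.length) :
    List.Disjoint (p.take a) (u :: p.drop b) := by
  intro x hx hx'
  rw [List.mem_iff_getElem] at hx
  obtain ⟨k, hk, rfl⟩ := hx
  have hk' : k < a := by simp [List.length_take] at hk; omega
  rw [List.getElem_take] at hx'
  rcases List.mem_cons.mp hx' with he | hmem
  · exact hu (he ▸ List.getElem_mem _)
  · rw [List.mem_iff_getElem] at hmem
    obtain ⟨k', hk'', he⟩ := hmem
    rw [List.getElem_drop] at he
    have := hnd.getElem_inj_iff.mp he
    simp [List.length_drop] at hk''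
    omega

set_option maxHeartbeats 4000000 in
lemma lemC1 (hG : G.ClosedMeek) (hD : D.IsDAG) (hrep : RepresentedBy D G)
    (hforb : Z ∩ G.BForb X Y = ∅)
    {p : List V} (hp : PMem D X Y Z p)
    (hmin : ∀ q, PMem D X Y Z q → p.length ≤ q.length)
    (hmu : ∀ q, PMem D X Y Z q → q.length = p.length → muDZ D Z p ≤ muDZ D Z q)
    {t : ℕ} (ht : t + 2 < p.length)
    (hcol : D.dir (p[t]'(by omega)) (p[t+1]'(by omega)) ∧
      D.dir (p[t+2]'ht) (p[t+1]'(by omega)))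
    (hGc1 : G.dir (p[t]'(by omega)) (p[t+1]'(by omega)))
    (hGc2 : G.dir (p[t+2]'ht) (p[t+1]'(by omega)))
    (hcz : (p[t+1]'(by omega)) ∉ Z)
    {u : V} (huE : G.undirE (p[t+1]'(by omega)) u) (hdu : D.dir (p[t+1]'(by omega)) u)
    {m : ℕ} (hmlt : m < depZ D Z (p[t+1]'(by omega))) (hru : ReachN D Z m u) : False := by
  classical
  have hn : 2 ≤ p.length := hp.len
  obtain ⟨z, hz, hdz⟩ := reachN_desc hru
  have hadj1 : G.adj (p[t]'(by omega)) u := meek_adj hG hGc1 huE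
  have hadj2 : G.adj (p[t+2]'ht) u := meek_adj hG hGc2 huE
  have hD1 : D.dir (p[t]'(by omega)) u := by
    rcases dag_dichotomy hD ((rep_adj hrep).mpr hadj1) with h | h
    · exact h
    · exact (dir3_acyc h hcol.1 hdu).elim
  have hD2 : D.dir (p[t+2]'ht) u := by
    rcases dag_dichotomy hD ((rep_adj hrep).mpr hadj2) with h | h
    · exact h
    · exact (dir3_acyc h hcol.2 hdu).elim
  have huZfacts : u ∈ Z ∨ (u ∉ Z ∧ ∃ z' ∈ Z, D.Desc u z') := by
    by_cases hu : u ∈ Z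
    · exact Or.inl hu
    · exact Or.inr ⟨hu, z, hz, hdz⟩
  by_cases hup : u ∈ p
  · -- u lies on p : splice to a strictly shorter witness
    rw [List.mem_iff_getElem] at hup
    obtain ⟨s, hs, hse⟩ := hup
    subst hse
    have hsne1 : s ≠ t + 1 := by
      intro he
      exact dir_ne hdu (getElem_idx_congr he.symm _)
    have hsne0 : s ≠ t := by
      intro he
      exact dir_ne hD1 (getElem_idx_congr he.symm _)
    have hsne2 : s ≠ t + 2 := by
      intro he
      exact dir_ne hD2 (getElem_idx_congr he.symm _)
    rcases (by omega : s < t ∨ t + 3 ≤ s) with hcs | hcs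
    · -- splice left : v0 … v_s , v_{t+2} … ; strictly shorter
      have hlen' : (spl p (s+1) (t+2)).length = (s+1) + (p.length - (t+2)) :=
        length_spl (by omega) (by omega)
      have hgL : ∀ k, k ≤ s → ∀ hk : k < (spl p (s+1) (t+2)).length,
          (spl p (s+1) (t+2))[k]'hk = p[k]'(by omega) := by
        intro k hks hk
        exact getElem_spl_left (by omega) (by omega)
      have hgR : ∀ k (_ : s + 1 ≤ k) (hk : k < (spl p (s+1) (t+2)).length),
          (spl p (s+1) (t+2))[k]'hk = p[k - (s+1) + (t+2)]'(by rw [hlen'] at hk; omega) := by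
        intro k hks hk
        exact getElem_spl_right hks (by omega) (by omega) (by rw [hlen'] at hk; omega)
      have hw : PMem D X Y Z (spl p (s+1) (t+2)) := by
        refine ⟨by rw [hlen']; omega, nodup_spl (by omega) hp.nd, ?_, ?_, ?_, ?_, ?_, ?_⟩
        · intro k h
          rcases (by omega : k + 1 ≤ s ∨ k = s ∨ s + 1 ≤ k) with hc | hc | hc
          · rw [hgL k (by omega), hgL (k+1) (by omega)]
            exact hp.adj k (by omega)
          · rw [hgL k (by omega), hgR (k+1) (by omega)]
            rw [getElem_idx_congr (by omega : k + 1 - (s+1) + (t+2) = t+2) (by omega),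
              getElem_idx_congr hc (by omega)]
            exact dir_adj' hD2
          · rw [hgR k (by omega), hgR (k+1) (by omega)]
            rw [getElem_idx_congr (by omega : k + 1 - (s+1) + (t+2) = (k - (s+1) + (t+2)) + 1)
              (by omega)]
            exact hp.adj _ (by rw [hlen'] at h; omega)
        · intro h
          rw [hgL 0 (by omega)]
          exact hp.hd (by omega)
        · intro h
          rw [hgR ((spl p (s+1) (t+2)).length - 1) (by rw [hlen']; omega)]
          rw [getElem_idx_congr (by rw [hlen']; omega :
            (spl p (s+1) (t+2)).length - 1 - (s+1) + (t+2) = p.length - 1) (by omega)]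
          exact hp.lst (by omega)
        · intro i h hi
          rcases (by omega : i ≤ s ∨ s + 1 ≤ i) with hc | hc
          · rw [hgL i hc]
            exact hp.ntl i (by omega) hi
          · rw [hgR i hc]
            exact hp.ntl _ (by rw [hlen'] at h; omega) (by omega)
        · intro j hj
          rcases (by omega : j + 2 ≤ s ∨ j + 1 = s ∨ j = s ∨ s + 1 ≤ j) with hc | hc | hc | hc
          · rw [hgL j (by omega), hgL (j+1) (by omega), hgL (j+2) (by omega)]
            exact hp.conn j (by omega)
          · -- middle is u = p[s]
            obtain rfl : s = j + 1 := by omega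
            rw [hgL j (by omega), hgL (j+1) (by omega), hgR (j+2) (by omega)]
            rw [getElem_idx_congr (by omega : j + 2 - (j+1+1) + (t+2) = t+2) (by omega)]
            by_cases hLin : D.dir (p[j]'(by omega)) (p[j+1]'(by omega))
            · constructor
              · intro _
                rcases huZfacts with huz | ⟨_, z', hz', hdz'⟩
                · exact ⟨_, huz, Or.inl rfl⟩
                · exact ⟨z', hz', hdz'⟩
              · intro hnc
                exact (hnc ⟨hLin, hD2⟩).elim
            · constructor
              · intro hcolw
                exact (hLin hcolw.1).elim
              · intro _
                exact (hp.conn j (by omega)).2 (fun hc => hLin hc.1)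
          · -- middle is p[t+2]
            rw [hgL j (by omega), hgR (j+1) (by omega), hgR (j+2) (by omega)]
            rw [getElem_idx_congr (by omega : j + 1 - (s+1) + (t+2) = t+2) (by omega),
              getElem_idx_congr (by omega : j + 2 - (s+1) + (t+2) = t+3) (by omega),
              getElem_idx_congr hc (by omega)]
            constructor
            · intro hcolw
              exact (dir_asymm hD2 hcolw.1).elim
            · intro _
              have := (hp.conn (t+1) (by rw [hlen'] at hj; omega)).2
                (fun hc => dir_asymm hcol.2 hc.1)
              rwa [getElem_idx_congr (by omega : t + 1 + 1 = t + 2) (by omega)] at this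
          · -- copy right
            rw [hgR j (by omega), hgR (j+1) (by omega), hgR (j+2) (by omega)]
            rw [getElem_idx_congr (by omega : j + 1 - (s+1) + (t+2) = (j - (s+1) + (t+2)) + 1)
              (by omega),
              getElem_idx_congr (by omega : j + 2 - (s+1) + (t+2) = (j - (s+1) + (t+2)) + 2)
              (by omega)]
            exact hp.conn _ (by rw [hlen'] at hj; omega)
        · refine ⟨s, by rw [hlen']; omega, ?_⟩
          rw [hgL s (by omega), hgR (s+1) (by omega)]
          rw [getElem_idx_congr (by omega : s + 1 - (s+1) + (t+2) = t+2) (by omega)]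
          exact hD2
      have := hmin _ hw
      rw [hlen'] at this
      omega
    · -- splice right : v0 … v_t , v_s …
      have hlen' : (spl p (t+1) s).length = (t+1) + (p.length - s) :=
        length_spl (by omega) (by omega)
      have hgL : ∀ k, k ≤ t → ∀ hk : k < (spl p (t+1) s).length,
          (spl p (t+1) s)[k]'hk = p[k]'(by omega) := by
        intro k hks hk
        exact getElem_spl_left (by omega) (by omega)
      have hgR : ∀ k (_ : t + 1 ≤ k) (hk : k < (spl p (t+1) s).length),
          (spl p (t+1) s)[k]'hk = p[k - (t+1) + s]'(by rw [hlen'] at hk; omega) := by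
        intro k hks hk
        exact getElem_spl_right hks (by omega) (by omega) (by rw [hlen'] at hk; omega)
      -- basic facts shared by both sub-branches
      have hwadj : ∀ k, ∀ h : k + 1 < (spl p (t+1) s).length,
          D.adj ((spl p (t+1) s)[k]'(by omega)) ((spl p (t+1) s)[k+1]'h) := by
        intro k h
        rcases (by omega : k + 1 ≤ t ∨ k = t ∨ t + 1 ≤ k) with hc | hc | hc
        · rw [hgL k (by omega), hgL (k+1) (by omega)]
          exact hp.adj k (by omega)
        · rw [hgL k (by omega), hgR (k+1) (by omega)]
          rw [getElem_idx_congr (by omega : k + 1 - (t+1) + s = s) (by omega),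
            getElem_idx_congr hc (by omega)]
          exact dir_adj hD1
        · rw [hgR k (by omega), hgR (k+1) (by omega)]
          rw [getElem_idx_congr (by omega : k + 1 - (t+1) + s = (k - (t+1) + s) + 1) (by omega)]
          exact hp.adj _ (by rw [hlen'] at h; omega)
      have hwhd : ∀ h : 0 < (spl p (t+1) s).length,
          ((spl p (t+1) s)[0]'h) ∈ X := by
        intro h
        rw [hgL 0 (by omega)]
        exact hp.hd (by omega)
      have hwlst : ∀ h : 0 < (spl p (t+1) s).length,
          ((spl p (t+1) s)[(spl p (t+1) s).length - 1]'(by omega)) ∈ Y := by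
        intro h
        rw [hgR ((spl p (t+1) s).length - 1) (by rw [hlen']; omega)]
        rw [getElem_idx_congr (by rw [hlen']; omega :
          (spl p (t+1) s).length - 1 - (t+1) + s = p.length - 1) (by omega)]
        exact hp.lst (by omega)
      have hwntl : ∀ i, ∀ h : i < (spl p (t+1) s).length, 1 ≤ i →
          ((spl p (t+1) s)[i]'h) ∉ X := by
        intro i h hi
        rcases (by omega : i ≤ t ∨ t + 1 ≤ i) with hc | hc
        · rw [hgL i hc]
          exact hp.ntl i (by omega) hi
        · rw [hgR i hc]
          exact hp.ntl _ (by rw [hlen'] at h; omega) (by omega)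
      have hwnd : (spl p (t+1) s).Nodup := nodup_spl (by omega) hp.nd
      have hwlen2 : 2 ≤ (spl p (t+1) s).length := by rw [hlen']; omega
      by_cases hfa : ∀ k, ∀ h : k + 1 < (spl p (t+1) s).length,
          D.dir ((spl p (t+1) s)[k]'(by omega)) ((spl p (t+1) s)[k+1]'h)
      · -- fully directed : proper causal path, contradict the forbidden set
        have hbp : G.BPossCausal (spl p (t+1) s) := fwd_bposs hD hrep hwlen2 hwnd hfa
        have hprop : G.ProperPathFromTo X Y (spl p (t+1) s) :=
          mk_proper hbp.1 hwhd hwlst hwntl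
        refine forbKill hD hrep hforb hprop hbp (i := t+1) (by omega)
          (by rw [hlen']; omega) hz ?_
        rw [hgR (t+1) (by omega)]
        rw [getElem_idx_congr (by omega : t + 1 - (t+1) + s = s) (by omega)]
        exact hdz
      · -- otherwise the spliced path is again a witness, strictly shorter
        push_neg at hfa
        obtain ⟨k, hk, hknd⟩ := hfa
        have hw : PMem D X Y Z (spl p (t+1) s) := by
          refine ⟨hwlen2, hwnd, hwadj, hwhd, hwlst, hwntl, ?_, ?_⟩
          · intro j hj
            rcases (by omega : j + 2 ≤ t ∨ j + 1 = t ∨ j = t ∨ t + 1 ≤ j) with hc | hc | hc | hc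
            · rw [hgL j (by omega), hgL (j+1) (by omega), hgL (j+2) (by omega)]
              exact hp.conn j (by omega)
            · -- middle is p[t]
              obtain rfl : t = j + 1 := by omega
              rw [hgL j (by omega), hgL (j+1) (by omega), hgR (j+2) (by omega)]
              rw [getElem_idx_congr (by omega : j + 2 - (j+1+1) + s = s) (by omega)]
              constructor
              · intro hcolw
                exact (dir_asymm hD1 hcolw.2).elim
              · intro _
                exact (hp.conn j (by omega)).2 (fun hc => dir_asymm hcol.1 hc.2)
            · -- middle is u = p[s]
              rw [hgL j (by omega), hgR (j+1) (by omega), hgR (j+2) (by omega)]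
              rw [getElem_idx_congr (by omega : j + 1 - (t+1) + s = s) (by omega),
                getElem_idx_congr (by omega : j + 2 - (t+1) + s = s + 1) (by omega),
                getElem_idx_congr hc (by omega)]
              by_cases hRin : D.dir (p[s+1]'(by rw [hlen'] at hj; omega)) (p[s]'(by omega))
              · constructor
                · intro _
                  rcases huZfacts with huz | ⟨_, z', hz', hdz'⟩
                  · exact ⟨_, huz, Or.inl rfl⟩
                  · exact ⟨z', hz', hdz'⟩
                · intro hnc
                  exact (hnc ⟨hD1, hRin⟩).elim
              · constructor
                · intro hcolw
                  exact (hRin hcolw.2).elim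
                · intro _
                  obtain ⟨s0, rfl⟩ : ∃ s0, s = s0 + 1 := ⟨s - 1, by omega⟩
                  exact (hp.conn s0 (by rw [hlen'] at hj; omega)).2
                    (fun hc => hRin hc.2)
            · -- copy right
              rw [hgR j (by omega), hgR (j+1) (by omega), hgR (j+2) (by omega)]
              rw [getElem_idx_congr (by omega : j + 1 - (t+1) + s = (j - (t+1) + s) + 1)
                (by omega),
                getElem_idx_congr (by omega : j + 2 - (t+1) + s = (j - (t+1) + s) + 2)
                (by omega)]
              exact hp.conn _ (by rw [hlen'] at hj; omega)
          · exact ⟨k, hk, (dag_dichotomy hD (hwadj k hk)).resolve_left hknd⟩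
        have := hmin _ hw
        rw [hlen'] at this
        omega
  · by_cases huX : u ∈ X
    · -- u ∈ X : the tail from u is a strictly shorter witness
      have hdl : (p.drop (t+2)).length = p.length - (t+2) := by simp [List.length_drop]
      have hwlen : (u :: p.drop (t+2)).length = 1 + (p.length - (t+2)) := by
        simp [List.length_drop]; omega
      have hg0 : ∀ h : 0 < (u :: p.drop (t+2)).length, (u :: p.drop (t+2))[0]'h = u :=
        fun _ => rfl
      have hgS : ∀ k, ∀ h : k + 1 < (u :: p.drop (t+2)).length,
          (u :: p.drop (t+2))[k+1]'h = p[t+2+k]'(by rw [hwlen] at h; omega) := by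
        intro k h
        show (p.drop (t+2))[k]'(by rw [hwlen] at h; simp [List.length_drop]; omega) = _
        rw [List.getElem_drop]
      have hw : PMem D X Y Z (u :: p.drop (t+2)) := by
        refine ⟨by rw [hwlen]; omega, ?_, ?_, ?_, ?_, ?_, ?_, ?_⟩
        · refine List.nodup_cons.mpr ⟨?_, hp.nd.sublist (List.drop_sublist _ _)⟩
          intro hmem
          exact hup ((List.drop_sublist _ _).mem hmem)
        · intro k h
          match k with
          | 0 =>
            rw [hg0, hgS 0 (by omega)]
            exact dir_adj' (by
              have := hD2
              rwa [getElem_idx_congr (by omega : t + 2 = t + 2 + 0) (by omega)] at this)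
          | (k0+1) =>
            rw [hgS k0 (by omega), hgS (k0+1) (by omega)]
            have := hp.adj (t+2+k0) (by rw [hwlen] at h; omega)
            rwa [getElem_idx_congr (by omega : t + 2 + k0 + 1 = t + 2 + (k0+1)) (by omega)]
              at this
        · intro h
          rw [hg0]
          exact huX
        · intro h
          have hl1 : (u :: p.drop (t+2)).length - 1 = ((u :: p.drop (t+2)).length - 2) + 1 := by
            rw [hwlen]; omega
          rw [getElem_idx_congr hl1 (by omega),
            hgS ((u :: p.drop (t+2)).length - 2) (by omega)]
          rw [getElem_idx_congr (by rw [hwlen]; omega :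
            t + 2 + ((u :: p.drop (t+2)).length - 2) = p.length - 1) (by omega)]
          exact hp.lst (by omega)
        · intro i h hi
          obtain ⟨k, rfl⟩ : ∃ k, i = k + 1 := ⟨i - 1, by omega⟩
          rw [hgS k (by omega)]
          exact hp.ntl _ _ (by omega)
        · intro j hj
          match j with
          | 0 =>
            rw [hg0, hgS 0 (by omega), hgS 1 (by omega)]
            constructor
            · intro hcolw
              refine (dir_asymm ?_ hcolw.1).elim
              have := hD2
              rwa [getElem_idx_congr (by omega : t + 2 = t + 2 + 0) (by omega)] at this
            · intro _
              have := (hp.conn (t+1) (by rw [hwlen] at hj; omega)).2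
                (fun hc => dir_asymm hcol.2 hc.1)
              rwa [getElem_idx_congr (by omega : t + 1 + 1 = t + 2 + 0) (by omega)] at this
          | (j0+1) =>
            rw [hgS j0 (by omega), hgS (j0+1) (by omega), hgS (j0+2) (by omega)]
            have := hp.conn (t+2+j0) (by rw [hwlen] at hj; omega)
            rwa [getElem_idx_congr (by omega : t + 2 + j0 + 1 = t + 2 + (j0+1)) (by omega),
              getElem_idx_congr (by omega : t + 2 + j0 + 2 = t + 2 + (j0+2)) (by omega)]
              at this
        · refine ⟨0, by rw [hwlen]; omega, ?_⟩
          rw [hg0, hgS 0 (by omega)]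
          have := hD2
          rwa [getElem_idx_congr (by omega : t + 2 = t + 2 + 0) (by omega)] at this
      have := hmin _ hw
      rw [hwlen] at this
      omega
    ·      -- swap : replace the collider by u, same length, strictly smaller μ
      have hwlen : (p.take (t+1) ++ u :: p.drop (t+2)).length = p.length := by
        simp [List.length_take, List.length_drop]
        omega
      have htk : (p.take (t+1)).length = t + 1 := by simp [List.length_take]; omega
      have hr1 : ∀ k, k ≤ t → ∀ h : k < (p.take (t+1) ++ u :: p.drop (t+2)).length,
          (p.take (t+1) ++ u :: p.drop (t+2))[k]'h = p[k]'(by rw [hwlen] at h; omega) := by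
        intro k hk h
        rw [List.getElem_append_left (by rw [htk]; omega)]
        rw [List.getElem_take]
      have hr2 : ∀ h : t + 1 < (p.take (t+1) ++ u :: p.drop (t+2)).length,
          (p.take (t+1) ++ u :: p.drop (t+2))[t+1]'h = u := by
        intro h
        rw [List.getElem_append_right (by rw [htk])]
        rw [getElem_idx_congr (show t + 1 - (p.take (t+1)).length = 0 by rw [htk]; omega)
          (by simp)]
        rfl
      have hr3 : ∀ k, t + 2 ≤ k → ∀ h : k < (p.take (t+1) ++ u :: p.drop (t+2)).length,
          (p.take (t+1) ++ u :: p.drop (t+2))[k]'h = p[k]'(by rw [hwlen] at h; omega) := by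
        intro k hk h
        rw [List.getElem_append_right (by rw [htk]; omega)]
        rw [getElem_idx_congr (show k - (p.take (t+1)).length = (k - (t+2)) + 1 by
            rw [htk]; omega) (by
            simp only [List.length_cons, List.length_drop]
            rw [hwlen] at h; omega)]
        rw [List.getElem_cons_succ, List.getElem_drop]
        exact getElem_idx_congr (by rw [hwlen] at h; omega) _
      have hw : PMem D X Y Z (p.take (t+1) ++ u :: p.drop (t+2)) := by
        refine ⟨by rw [hwlen]; exact hp.len, ?_, ?_, ?_, ?_, ?_, ?_, ?_⟩
        · refine List.nodup_append'.mpr ⟨hp.nd.sublist (List.take_sublist _ _), ?_, ?_⟩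
          · refine List.nodup_cons.mpr ⟨?_, hp.nd.sublist (List.drop_sublist _ _)⟩
            intro hmem
            exact hup ((List.drop_sublist _ _).mem hmem)
          · exact take_disjoint_cons_drop hp.nd hup (by omega) (by omega)
        · intro k h
          rcases (by omega : k + 1 ≤ t ∨ k = t ∨ k = t + 1 ∨ t + 2 ≤ k) with hc | hc | hc | hc
          · rw [hr1 k (by omega), hr1 (k+1) (by omega)]
            exact hp.adj k (by rw [hwlen] at h; omega)
          · rw [hr1 k (by omega), getElem_idx_congr (show k + 1 = t + 1 by omega) (by omega),
              hr2, getElem_idx_congr hc (by omega)]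
            exact dir_adj hD1
          · rw [getElem_idx_congr hc (by omega), hr2,
              getElem_idx_congr (show k + 1 = t + 2 by omega) (by omega), hr3 (t+2) (by omega)]
            exact dir_adj' hD2
          · rw [hr3 k (by omega), hr3 (k+1) (by omega)]
            exact hp.adj k (by rw [hwlen] at h; omega)
        · intro h
          rw [hr1 0 (by omega)]
          exact hp.hd (by omega)
        · intro h
          rw [getElem_idx_congr (show (p.take (t+1) ++ u :: p.drop (t+2)).length - 1
              = p.length - 1 by rw [hwlen]) (by rw [hwlen]; omega)]
          rw [hr3 (p.length - 1) (by omega)]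
          exact hp.lst (by omega)
        · intro i h hi
          rcases (by omega : i ≤ t ∨ i = t + 1 ∨ t + 2 ≤ i) with hc | hc | hc
          · rw [hr1 i hc]
            exact hp.ntl i (by rw [hwlen] at h; omega) hi
          · rw [getElem_idx_congr hc (by omega), hr2]
            exact huX
          · rw [hr3 i hc]
            exact hp.ntl i (by rw [hwlen] at h; omega) hi
        · intro j hj
          rcases (by omega : j + 2 ≤ t ∨ j + 1 = t ∨ j = t ∨ j = t + 1 ∨ t + 2 ≤ j)
            with hc | hc | hc | hc | hc
          · rw [hr1 j (by omega), hr1 (j+1) (by omega), hr1 (j+2) (by omega)]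
            exact hp.conn j (by rw [hwlen] at hj; omega)
          · -- middle is p[t]
            rw [hr1 j (by omega), hr1 (j+1) (by omega),
              getElem_idx_congr (show j + 2 = t + 1 by omega) (by omega), hr2,
              getElem_idx_congr (show j + 1 = t by omega) (by omega)]
            constructor
            · intro hcolw
              exact (dir_asymm hD1 hcolw.2).elim
            · intro _
              have := (hp.conn j (by rw [hwlen] at hj; omega)).2
                (fun hcp => dir_asymm hcol.1 (by
                  have := hcp.2
                  rwa [getElem_idx_congr (show j + 2 = t + 1 by omega) (by omega),
                    getElem_idx_congr (show j + 1 = t by omega) (by omega)] at this))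
              rwa [getElem_idx_congr (show j + 1 = t by omega) (by omega)] at this
          · -- middle is u
            rw [hr1 j (by omega), getElem_idx_congr (show j + 1 = t + 1 by omega) (by omega),
              hr2, getElem_idx_congr (show j + 2 = t + 2 by omega) (by omega),
              hr3 (t+2) (by omega), getElem_idx_congr hc (by omega)]
            constructor
            · intro _
              rcases huZfacts with huz | ⟨_, z', hz', hdz'⟩
              · exact ⟨_, huz, Or.inl rfl⟩
              · exact ⟨z', hz', hdz'⟩
            · intro hnc
              exact (hnc ⟨hD1, hD2⟩).elim
          · -- middle is p[t+2]
            rw [getElem_idx_congr hc (by omega), hr2,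
              getElem_idx_congr (show j + 1 = t + 2 by omega) (by omega), hr3 (t+2) (by omega),
              getElem_idx_congr (show j + 2 = t + 3 by omega) (by omega),
              hr3 (t+3) (by omega)]
            constructor
            · intro hcolw
              exact (dir_asymm hD2 hcolw.1).elim
            · intro _
              have := (hp.conn (t+1) (by rw [hwlen] at hj; omega)).2
                (fun hcp => dir_asymm hcol.2 hcp.1)
              rwa [getElem_idx_congr (show t + 1 + 1 = t + 2 by omega) (by omega)] at this
          · rw [hr3 j (by omega), hr3 (j+1) (by omega), hr3 (j+2) (by omega)]
            exact hp.conn j (by rw [hwlen] at hj; omega)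
        · refine ⟨t+1, by rw [hwlen]; omega, ?_⟩
          rw [hr2, getElem_idx_congr (show t + 1 + 1 = t + 2 by omega) (by omega),
            hr3 (t+2) (by omega)]
          exact hD2
      -- strict μ decrease
      have hreachC : ∃ nn, ReachN D Z nn (p[t+1]'(by omega)) := by
        obtain ⟨z0, hz0, hd0⟩ := (hp.conn t ht).1 ⟨hcol.1, hcol.2⟩
        exact desc_reachN hd0 hz0
      have hterm : ∀ j ∈ Finset.range p.length,
          (if h : j + 2 < (p.take (t+1) ++ u :: p.drop (t+2)).length then
            (if D.dir ((p.take (t+1) ++ u :: p.drop (t+2))[j]'(by omega))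
                  ((p.take (t+1) ++ u :: p.drop (t+2))[j+1]'(by omega)) ∧
                D.dir ((p.take (t+1) ++ u :: p.drop (t+2))[j+2]'h)
                  ((p.take (t+1) ++ u :: p.drop (t+2))[j+1]'(by omega)) ∧
                ((p.take (t+1) ++ u :: p.drop (t+2))[j+1]'(by omega)) ∉ Z
             then depZ D Z ((p.take (t+1) ++ u :: p.drop (t+2))[j+1]'(by omega)) else 0)
          else 0) ≤
          (if h : j + 2 < p.length then
            (if D.dir (p[j]'(by omega)) (p[j+1]'(by omega)) ∧
                D.dir (p[j+2]'h) (p[j+1]'(by omega)) ∧ (p[j+1]'(by omega)) ∉ Z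
             then depZ D Z (p[j+1]'(by omega)) else 0)
          else 0) := by
        intro j _
        by_cases hj2 : j + 2 < p.length
        · rw [dif_pos hj2, dif_pos (show j + 2 < (p.take (t+1) ++ u :: p.drop (t+2)).length by
            rw [hwlen]; omega)]
          beta_reduce
          rcases (by omega : j + 2 ≤ t ∨ j + 1 = t ∨ j = t ∨ j = t + 1 ∨ t + 2 ≤ j)
            with hc | hc | hc | hc | hc
          · rw [hr1 j (by omega), hr1 (j+1) (by omega), hr1 (j+2) (by omega)]
          · rw [hr1 j (by omega), hr1 (j+1) (by omega),
              getElem_idx_congr (l := (p.take (t+1) ++ u :: p.drop (t+2))) (show j + 2 = t + 1 by omega) (by rw [hwlen]; omega),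
              hr2]
            rw [if_neg (fun hcon => dir_asymm hD1 (by
              have h9 := hcon.2.1
              rwa [getElem_idx_congr (l := p) (show j + 1 = t by omega) (by omega)] at h9))]
            exact Nat.zero_le _
          · rw [hr1 j (by omega),
              getElem_idx_congr (l := (p.take (t+1) ++ u :: p.drop (t+2))) (show j + 1 = t + 1 by omega) (by rw [hwlen]; omega),
              hr2,
              getElem_idx_congr (l := (p.take (t+1) ++ u :: p.drop (t+2))) (show j + 2 = t + 2 by omega) (by rw [hwlen]; omega),
              hr3 (t+2) (by omega),
              getElem_idx_congr (l := p) hc (by omega),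
              getElem_idx_congr (l := p) (show j + 1 = t + 1 by omega) (by omega),
              getElem_idx_congr (l := p) (show j + 2 = t + 2 by omega) (by omega)]
            rcases huZfacts with huz | ⟨hunz, _, _, _⟩
            · rw [if_neg (fun hcon => hcon.2.2 huz), if_pos ⟨hcol.1, hcol.2, hcz⟩]
              exact Nat.zero_le _
            · rw [if_pos ⟨hD1, hD2, hunz⟩, if_pos ⟨hcol.1, hcol.2, hcz⟩]
              calc depZ D Z u ≤ m := depZ_le hru
                _ ≤ depZ D Z (p[t+1]'(by omega)) := by omega
          · rw [getElem_idx_congr (l := (p.take (t+1) ++ u :: p.drop (t+2))) hc (by rw [hwlen]; omega), hr2,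
              getElem_idx_congr (l := (p.take (t+1) ++ u :: p.drop (t+2))) (show j + 1 = t + 2 by omega) (by rw [hwlen]; omega),
              hr3 (t+2) (by omega),
              getElem_idx_congr (l := (p.take (t+1) ++ u :: p.drop (t+2))) (show j + 2 = t + 3 by omega) (by rw [hwlen]; omega),
              hr3 (t+3) (by omega)]
            rw [if_neg (fun hcon => dir_asymm hD2 hcon.1)]
            exact Nat.zero_le _
          · rw [hr3 j (by omega), hr3 (j+1) (by omega), hr3 (j+2) (by omega)]
        · rw [dif_neg hj2, dif_neg (show ¬ j + 2 < (p.take (t+1) ++ u :: p.drop (t+2)).length by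
            rw [hwlen]; omega)]
      have hstrict : (if h : t + 2 < (p.take (t+1) ++ u :: p.drop (t+2)).length then
            (if D.dir ((p.take (t+1) ++ u :: p.drop (t+2))[t]'(by omega))
                  ((p.take (t+1) ++ u :: p.drop (t+2))[t+1]'(by omega)) ∧
                D.dir ((p.take (t+1) ++ u :: p.drop (t+2))[t+2]'h)
                  ((p.take (t+1) ++ u :: p.drop (t+2))[t+1]'(by omega)) ∧
                ((p.take (t+1) ++ u :: p.drop (t+2))[t+1]'(by omega)) ∉ Z
             then depZ D Z ((p.take (t+1) ++ u :: p.drop (t+2))[t+1]'(by omega)) else 0)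
          else 0) <
          (if h : t + 2 < p.length then
            (if D.dir (p[t]'(by omega)) (p[t+1]'(by omega)) ∧
                D.dir (p[t+2]'h) (p[t+1]'(by omega)) ∧ (p[t+1]'(by omega)) ∉ Z
             then depZ D Z (p[t+1]'(by omega)) else 0)
          else 0) := by
        rw [dif_pos ht, dif_pos (show t + 2 < (p.take (t+1) ++ u :: p.drop (t+2)).length by
          rw [hwlen]; omega)]
        beta_reduce
        rw [hr1 t (by omega), hr2, hr3 (t+2) (by omega)]
        refine ite_lt_ite ⟨hcol.1, hcol.2, hcz⟩ (fun hA => ?_) (depZ_pos hreachC hcz)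
        calc depZ D Z u ≤ m := depZ_le hru
          _ < depZ D Z (p[t+1]'(by omega)) := hmlt
      have hlt : muDZ D Z (p.take (t+1) ++ u :: p.drop (t+2)) < muDZ D Z p := by
        unfold muDZ
        rw [show Finset.range (p.take (t+1) ++ u :: p.drop (t+2)).length
            = Finset.range p.length by rw [hwlen]]
        exact Finset.sum_lt_sum hterm ⟨t, Finset.mem_range.mpr (by omega), hstrict⟩
      have := hmu _ hw (by rw [hwlen])
      omega


end C1
end PDAG
set_option maxHeartbeats 1000000 in
theorem stmt5_aux {V : Type} (G : PDAG V) (hG : G.ClosedMeek) (X Y Z : Set V)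
    (hXY : Disjoint X Y) (hZ : Disjoint Z (X ∪ Y))
    (hamen : G.BAmenable X Y) (hforb : Z ∩ G.BForb X Y = ∅)
    (hblock : G.BBlocking X Y Z) :
    ∀ D : PDAG V, D.IsDAG → PDAG.RepresentedBy D G →
      ∀ p, D.ProperPathFromTo X Y p → D.NonCausal p → D.Blocked p Z := by
  classical
  intro D hD hrep p0 hprop0 hnc0 hdc0
  open PDAG in
  have hp0 : PMem D X Y Z p0 := pmem_of_defs hprop0 hnc0 hdc0
  obtain ⟨p1, hp1, hp1len⟩ :=
    Nat.sInf_mem (show {n | ∃ q, PDAG.PMem D X Y Z q ∧ q.length = n}.Nonempty from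
      ⟨p0.length, p0, hp0, rfl⟩)
  have hminlen : ∀ q, PDAG.PMem D X Y Z q → p1.length ≤ q.length := fun q hq => by
    rw [hp1len]; exact Nat.sInf_le ⟨q, hq, rfl⟩
  obtain ⟨p, hp, hplen, hpmu⟩ :=
    Nat.sInf_mem (show {m | ∃ q, PDAG.PMem D X Y Z q ∧ q.length = p1.length ∧
      PDAG.muDZ D Z q = m}.Nonempty from ⟨_, p1, hp1, rfl, rfl⟩)
  have hmin : ∀ q, PDAG.PMem D X Y Z q → p.length ≤ q.length := fun q hq =>
    hplen ▸ hminlen q hq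
  have hmu : ∀ q, PDAG.PMem D X Y Z q → q.length = p.length →
      PDAG.muDZ D Z p ≤ PDAG.muDZ D Z q := fun q hq hlq => by
    rw [hpmu]; exact Nat.sInf_le ⟨q, hq, by rw [hlq, hplen], rfl⟩
  clear hp1len hminlen hplen hpmu hp0 hdc0 hnc0 hprop0
  have hn2 : 2 ≤ p.length := hp.len
  -- collider triples are unshielded G-colliders
  have hA : ∀ t, ∀ h : t + 2 < p.length,
      (D.dir (p[t]'(by omega)) (p[t+1]'(by omega)) ∧ D.dir (p[t+2]'h) (p[t+1]'(by omega))) →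
      G.dir (p[t]'(by omega)) (p[t+1]'(by omega)) ∧ G.dir (p[t+2]'h) (p[t+1]'(by omega)) ∧
        ¬ G.adj (p[t]'(by omega)) (p[t+2]'h) := by
    intro t h hcol
    have hunsh : ¬ D.adj (p[t]'(by omega)) (p[t+2]'h) := fun hsh =>
      PDAG.lemA1 hD hrep hforb hp hmin h hcol hsh
    exact (hrep.2.1 (p[t]'(by omega)) (p[t+1]'(by omega)) (p[t+2]'h)).mp
      ⟨hcol.1, hcol.2, hunsh⟩
  -- every collider reaches Z through G-directed edges
  have hC2 : ∀ t, ∀ h : t + 2 < p.length,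
      (D.dir (p[t]'(by omega)) (p[t+1]'(by omega)) ∧ D.dir (p[t+2]'h) (p[t+1]'(by omega))) →
      ∃ z ∈ Z, G.Desc (p[t+1]'(by omega)) z := by
    intro t h hcol
    by_cases hcz : (p[t+1]'(by omega)) ∈ Z
    · exact ⟨_, hcz, Or.inl rfl⟩
    obtain ⟨z0, hz0, hd0⟩ := (hp.conn t h).1 ⟨hcol.1, hcol.2⟩
    have hreach : ∃ nn, PDAG.ReachN D Z nn (p[t+1]'(by omega)) := PDAG.desc_reachN hd0 hz0
    rcases PDAG.collider_resolution hG hD hrep (PDAG.depZ D Z (p[t+1]'(by omega)))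
        (p[t+1]'(by omega)) (PDAG.depZ_reach hreach) with
      hleft | ⟨u, mm, huE, hdu, hmm, hru⟩
    · exact hleft
    · exact (PDAG.lemC1 hG hD hrep hforb hp hmin hmu h hcol (hA t h hcol).1
        (hA t h hcol).2.1 hcz huE hdu hmm hru).elim
  have hdefs : G.DefiniteStatus p := by
    refine PDAG.mk_defstat ?_
    intro t h
    by_cases hcolD : (D.dir (p[t]'(by omega)) (p[t+1]'(by omega)) ∧
        D.dir (p[t+2]'h) (p[t+1]'(by omega)))
    · exact Or.inl ⟨(hA t h hcolD).1, (hA t h hcolD).2.1⟩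
    refine Or.inr ?_
    by_cases hsh : D.adj (p[t]'(by omega)) (p[t+2]'h)
    · rcases PDAG.lemB hG hD hrep hamen hforb hblock hp hmin h hsh hcolD with
        ⟨s, hts, hs3, _, hd1, hd2, _⟩ | ⟨h3, _, hd1, hd2, _⟩
      · subst hts
        exact Or.inl (hA s (by omega) ⟨hd1, hd2⟩).2.1
      · exact Or.inr (Or.inl (hA (t+1) (by omega) ⟨hd1, hd2⟩).1)
    · exact PDAG.meek_unshielded hG ((PDAG.rep_adj hrep).mp (hp.adj t (by omega)))
        ((PDAG.rep_adj hrep).mp (hp.adj (t+1) (by omega)))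
        (fun hadj => hsh ((PDAG.rep_adj hrep).mpr hadj))
        (fun hcc => hcolD ⟨PDAG.rep_dir hrep hcc.1, PDAG.rep_dir hrep hcc.2⟩)
  have hconnG : G.DConn p Z := by
    refine PDAG.mk_dconn ?_
    intro t h
    constructor
    · intro hcolG
      exact hC2 t h ⟨PDAG.rep_dir hrep hcolG.1, PDAG.rep_dir hrep hcolG.2⟩
    · intro hncolG
      refine (hp.conn t h).2 (fun hcolD => hncolG ?_)
      exact ⟨(hA t h ⟨hcolD.1, hcolD.2⟩).1, (hA t h ⟨hcolD.1, hcolD.2⟩).2.1⟩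
  by_cases hbk : ∃ i, ∃ j, ∃ hj : j < p.length, ∃ hij : i < j,
      G.dir (p[j]'hj) (p[i]'(by omega))
  · obtain ⟨i, j, hj, hij, hdir⟩ := hbk
    exact PDAG.blockKill hblock (PDAG.pmem_properG hrep hp) hij hj hdir hdefs hconnG
  · have hbposs : G.BPossCausal p := PDAG.mk_bposs (PDAG.pmem_isPathG hrep hp)
      (fun i j hj hij hdir => hbk ⟨i, j, hj, hij, hdir⟩)
    obtain ⟨hfmem, hfdir⟩ :=
      Nat.sInf_mem (show {m | ∃ h : m + 1 < p.length,
        D.dir (p[m+1]'h) (p[m]'(by omega))}.Nonempty from hp.nc)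
    set f := sInf {m | ∃ h : m + 1 < p.length, D.dir (p[m+1]'h) (p[m]'(by omega))} with hf
    rcases Nat.eq_zero_or_pos f with hf0 | hpos
    · have hfdir' : D.dir (p[1]'(by omega)) (p[0]'(by omega)) := by
        have h9 := hfdir
        rwa [PDAG.getElem_idx_congr (show f + 1 = 1 by omega) (by omega),
          PDAG.getElem_idx_congr (show f = 0 from hf0) (by omega)] at h9
      exact PDAG.dir_asymm hfdir' (PDAG.rep_dir hrep
        (PDAG.amenUse hamen (PDAG.pmem_properG hrep hp) hbposs))
    · obtain ⟨s, hs⟩ : ∃ s, f = s + 1 := ⟨f - 1, by omega⟩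
      have hfm2 : s + 2 < p.length := by omega
      have hfdir' : D.dir (p[s+2]'(by omega)) (p[s+1]'(by omega)) := by
        have h9 := hfdir
        rwa [PDAG.getElem_idx_congr (show f + 1 = s + 2 by omega) (by omega),
          PDAG.getElem_idx_congr (show f = s + 1 from hs) (by omega)] at h9
      have hfwd : D.dir (p[s]'(by omega)) (p[s+1]'(by omega)) := by
        refine (PDAG.dag_dichotomy hD (hp.adj s (by omega))).resolve_right (fun hb => ?_)
        have h8 : s ∈ {m | ∃ h : m + 1 < p.length, D.dir (p[m+1]'h) (p[m]'(by omega))} :=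
          ⟨by omega, hb⟩
        have := Nat.sInf_le h8
        omega
      obtain ⟨z, hz, hdz⟩ := (hp.conn s (by omega)).1 ⟨hfwd, hfdir'⟩
      exact PDAG.forbKill hD hrep hforb (PDAG.pmem_properG hrep hp) hbposs (i := s+1)
        (by omega) (by omega) hz hdz

/-- under b-amenability and the b-forbidden set condition, if `Z` blocks all
proper b-non-causal definite status paths from `X` to `Y` in `G`, then in every DAG
represented by `G`, `Z` blocks every proper non-causal path from `X` to `Y`. -/
theorem stmt5 {V : Type} (G : PDAG V) (hG : G.ClosedMeek) (X Y Z : Set V)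
    (hXY : Disjoint X Y) (hZ : Disjoint Z (X ∪ Y))
    (hamen : G.BAmenable X Y) (hforb : Z ∩ G.BForb X Y = ∅)
    (hblock : G.BBlocking X Y Z) :
    ∀ D : PDAG V, D.IsDAG → PDAG.RepresentedBy D G →
      ∀ p, D.ProperPathFromTo X Y p → D.NonCausal p → D.Blocked p Z :=
  stmt5_aux G hG X Y Z hXY hZ hamen hforb hblock
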